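/- Let π be a dominant integral weight with Stab_W(π) = W_P, and let u < w be π-minuscule elements in W^P. Then the interval [u,w]^P ⊆ W^P is the same whether computed in the (left) weak Bruhat order or in the strong Bruhat order, i.e. {v ∈ W^P : u ≤ v ≤ w} = {v′ ∈ W^P : u ≤_L v′ ≤_L w}. -/

import Mathlib

open scoped Classical BigOperators

/-- A bundled setting for a finite crystallographic root system together with its
Weyl group, its action on the rational span of the weight lattice, reflections,
and the data of coefficients of roots in the basis of simple roots. -/
structure WeylSetting where
  /-- index set of the Dynkin diagram (simple roots) -/
  I : Type
  [fintypeI : Fintype I]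
  [decEqI : DecidableEq I]
  /-- rational span of the weight lattice -/
  V : Type
  [acg : AddCommGroup V]
  [mod : Module ℚ V]
  /-- the Weyl group -/
  W : Type
  [grp : Group W]
  /-- the action of the Weyl group on weights -/
  act : W →* (V ≃ₗ[ℚ] V)
  /-- the simple roots -/
  simple : I → V
  /-- the (finite) set of roots -/
  roots : Finset V
  /-- `coroot β μ` is the pairing `⟨μ, β∨⟩` -/
  coroot : V → (V →ₗ[ℚ] ℚ)
  /-- the reflection `s_β ∈ W` associated to a root `β` -/
  srefl : V → W
  /-- coefficients of a positive root in the basis of simple roots -/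
  posCoeff : V → I → ℕ
  simple_mem : ∀ i, simple i ∈ roots
  simple_indep : LinearIndependent ℚ simple
  roots_neg : ∀ β ∈ roots, -β ∈ roots
  root_pos_or_neg : ∀ β ∈ roots,
    (∃ c : I → ℚ, (∀ i, 0 ≤ c i) ∧ β = ∑ i, c i • simple i) ∨
    (∃ c : I → ℚ, (∀ i, 0 ≤ c i) ∧ -β = ∑ i, c i • simple i)
  coroot_self : ∀ β ∈ roots, coroot β β = 2
  crystallographic : ∀ β ∈ roots, ∀ γ ∈ roots, ∃ n : ℤ, coroot β γ = n
  posCoeff_spec : ∀ β ∈ roots,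
    (∃ c : I → ℚ, (∀ i, 0 ≤ c i) ∧ β = ∑ i, c i • simple i) →
    β = ∑ i, (posCoeff β i : ℚ) • simple i
  srefl_apply : ∀ β ∈ roots, ∀ v : V, act (srefl β) v = v - coroot β v • β
  act_faithful : ∀ g : W, (∀ v : V, act g v = v) → g = 1
  roots_invariant : ∀ g : W, ∀ β ∈ roots, act g β ∈ roots
  coroot_equivariant : ∀ g : W, ∀ β ∈ roots, ∀ v : V,
    coroot (act g β) (act g v) = coroot β v
  generated : ∀ g : W, ∃ l : List I, g = (l.map fun i => srefl (simple i)).prod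

namespace WeylSetting

attribute [instance] fintypeI decEqI acg mod grp

variable (D : WeylSetting)

/-- the simple reflection attached to a node of the Dynkin diagram -/
def s (i : D.I) : D.W := D.srefl (D.simple i)

/-- the product `s_{i_1} ⋯ s_{i_r}` of the simple reflections listed in `l` -/
def wordProd (l : List D.I) : D.W := (l.map D.s).prod

/-- `β` is a positive root: a root which is a nonnegative combination of simple roots -/
def IsPosRoot (β : D.V) : Prop :=
  β ∈ D.roots ∧ ∃ c : D.I → ℚ, (∀ i, 0 ≤ c i) ∧ β = ∑ i, c i • D.simple i

/-- the length of a Weyl group element -/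
noncomputable def length (g : D.W) : ℕ :=
  sInf {n | ∃ l : List D.I, l.length = n ∧ D.wordProd l = g}

/-- `l` is a reduced word for `g` -/
def IsReduced (l : List D.I) (g : D.W) : Prop :=
  D.wordProd l = g ∧ l.length = D.length g

/-- the number of reduced words of `g` -/
noncomputable def RedCard (g : D.W) : ℕ := Nat.card {l : List D.I // D.IsReduced l g}

/-- the (strong) Bruhat order on the Weyl group -/
def bruhatLE : D.W → D.W → Prop :=
  Relation.ReflTransGen
    (fun a b => (∃ β, D.IsPosRoot β ∧ b = D.srefl β * a) ∧ D.length a < D.length b)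

/-- strict (strong) Bruhat order -/
def bruhatLT (a b : D.W) : Prop := D.bruhatLE a b ∧ a ≠ b

/-- the left weak Bruhat order: `a ≤_L b` iff `ℓ(b a⁻¹) + ℓ(a) = ℓ(b)` -/
def weakLE (a b : D.W) : Prop := D.length (b * a⁻¹) + D.length a = D.length b

/-- the height of a positive root: the sum of its coefficients in the simple roots -/
noncomputable def ht (β : D.V) : ℕ := ∑ i, D.posCoeff β i

/-- an integral weight: the pairings with all positive coroots are integers -/
def IsIntegral (lam : D.V) : Prop :=
  ∀ β, D.IsPosRoot β → ∃ n : ℤ, D.coroot β lam = n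

/-- a dominant integral weight -/
def IsDominant (lam : D.V) : Prop :=
  D.IsIntegral lam ∧ ∀ i, 0 ≤ D.coroot (D.simple i) lam

/-- a pre-dominant integral weight: `⟨λ, β∨⟩ ≥ -1` for all positive roots `β` -/
def IsPreDominant (lam : D.V) : Prop :=
  D.IsIntegral lam ∧ ∀ β, D.IsPosRoot β → -1 ≤ D.coroot β lam

/-- the diagram `D(λ) = {β ∈ R⁺ : ⟨λ, β∨⟩ = -1}` of a pre-dominant weight -/
noncomputable def diagram (lam : D.V) : Finset D.V :=
  D.roots.filter fun β => D.IsPosRoot β ∧ D.coroot β lam = -1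

/-- `IsWeightPath λ [β₁, …, β_r]` says that
`λ = λ₀ →β₁ λ₁ →β₂ ⋯ →β_r λ_r` is a `λ`-path, i.e. each `β_j` is a positive
root, `⟨λ_{j-1}, β_j∨⟩ = -1` and `λ_j = s_{β_j}(λ_{j-1})`. -/
def IsWeightPath : D.V → List D.V → Prop
  | _, [] => True
  | lam, β :: rest =>
      D.IsPosRoot β ∧ D.coroot β lam = -1 ∧
        IsWeightPath (D.act (D.srefl β) lam) rest

/-- the term `1/β₁ ⋅ 1/(β₁+β₂) ⋅ … ⋅ 1/(β₁+⋯+β_r)` attached to a path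
`(β₁, …, β_r)`, computed in a field `F` via a linear embedding `emb`. -/
noncomputable def pathTerm {F : Type} [Field F] [Algebra ℚ F]
    (emb : D.V →ₗ[ℚ] F) (l : List D.V) : F :=
  ∏ j ∈ Finset.range l.length, (emb ((l.take (j + 1)).sum))⁻¹

/-- `w` is a π-minuscule element (in the sense of Peterson). -/
def IsMinuscule (pi : D.V) (w : D.W) : Prop :=
  ∃ l : List D.I, D.IsReduced l w ∧
    ∀ k : Fin l.length,
      D.coroot (D.simple (l.get k)) (D.act (D.wordProd (l.drop (k.val + 1))) pi) = 1

/-- the stabilizer `W_π = Stab_W(π)` of a weight -/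
def stab (pi : D.V) : Subgroup D.W where
  carrier := {g | D.act g pi = pi}
  one_mem' := by simp
  mul_mem' := by
    intro a b ha hb
    simp only [Set.mem_setOf_eq] at *
    calc D.act (a * b) pi = D.act a (D.act b pi) := by rw [map_mul]; rfl
    _ = pi := by rw [hb, ha]
  inv_mem' := by
    intro a ha
    simp only [Set.mem_setOf_eq] at *
    calc D.act a⁻¹ pi = D.act a⁻¹ (D.act a pi) := by rw [ha]
    _ = D.act (a⁻¹ * a) pi := by rw [map_mul]; rfl
    _ = pi := by simp

/-- `u` is the minimal-length representative of its coset `uH` -/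
def IsMinRep (H : Subgroup D.W) (u : D.W) : Prop :=
  ∀ g : D.W, u⁻¹ * g ∈ H → D.length u ≤ D.length g

/-- `a` and `b` lie in the same coset of `H`, i.e. `aH = bH` -/
def SameCoset (H : Subgroup D.W) (a b : D.W) : Prop := a⁻¹ * b ∈ H

/-- `u →β w` in `W^P`: `β` is a positive root, `u, w` are minimal-length
representatives, `s_β w H = u H`, and `u < w` in Bruhat order -/
def Arrow (H : Subgroup D.W) (u w : D.W) (β : D.V) : Prop :=
  D.IsPosRoot β ∧ D.IsMinRep H u ∧ D.IsMinRep H w ∧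
    D.SameCoset H (D.srefl β * w) u ∧ D.bruhatLT u w

/-- `ArrowPath H w [β₁, …, β_r]` encodes a directed path
`x_r →β_r ⋯ → x_1 →β₁ x_0 = w` in the Bruhat graph on `W^P`. -/
def ArrowPath (H : Subgroup D.W) : D.W → List D.V → Prop
  | _, [] => True
  | w, β :: rest => ∃ u, D.Arrow H u w β ∧ ArrowPath H u rest

/-- directed paths as above whose vertices all lie above `v` in Bruhat order -/
def ArrowPathGE (H : Subgroup D.W) (v : D.W) : D.W → List D.V → Prop
  | _, [] => True
  | w, β :: rest => ∃ u, D.Arrow H u w β ∧ D.bruhatLE v u ∧ ArrowPathGE H v u rest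

/-- directed paths from `u` to `w`:
`u = x_r →β_r ⋯ → x_1 →β₁ x_0 = w` encoded by the list `[β₁, …, β_r]`. -/
def ArrowPathFromTo (H : Subgroup D.W) (u : D.W) : D.W → List D.V → Prop
  | w, [] => u = w
  | w, β :: rest => ∃ x, D.Arrow H x w β ∧ ArrowPathFromTo H u x rest

/-- `S(w) = {β ∈ R⁺ : s_β w < w}` -/
noncomputable def Sset (w : D.W) : Finset D.V :=
  D.roots.filter fun β => D.IsPosRoot β ∧ D.bruhatLT (D.srefl β * w) w

/-- `S(w/v) = {β ∈ R⁺ : v ≤ s_β w < w}` -/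
noncomputable def SsetSkew (v w : D.W) : Finset D.V :=
  D.roots.filter fun β =>
    D.IsPosRoot β ∧ D.bruhatLE v (D.srefl β * w) ∧ D.bruhatLT (D.srefl β * w) w

/-- an oriented edge `x → y` in the Bruhat graph of `G/P`: `x, y` are minimal
representatives, `xH < yH`, and `yH = x s_γ H` for some positive root `γ` -/
def GEdge (H : Subgroup D.W) (x y : D.W) : Prop :=
  D.IsMinRep H x ∧ D.IsMinRep H y ∧ D.bruhatLT x y ∧
    ∃ γ, D.IsPosRoot γ ∧ D.SameCoset H (x * D.srefl γ) y

/-- the (unique) positive root `γ` with `yH = x s_γ H` attached to an edge -/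
noncomputable def edgeRoot (H : Subgroup D.W) (x y : D.W) : D.V :=
  if h : ∃ γ, D.IsPosRoot γ ∧ D.SameCoset H (x * D.srefl γ) y then h.choose else 0

/-- `GChainTo H v t [x₁, …, x_r]` encodes a directed path
`v ≤ x_r → ⋯ → x_1 → x_0 = t` in the Bruhat graph of `G/P` -/
def GChainTo (H : Subgroup D.W) (v : D.W) : D.W → List D.W → Prop
  | _, [] => True
  | t, x :: rest => D.GEdge H x t ∧ D.bruhatLE v x ∧ GChainTo H v x rest

/-- the weighted term
`(m_Λ(x_r,x_{r-1})/W_Λ(x_r)) ⋯ (m_Λ(x_1,x_0)/W_Λ(x_1))` of a path in the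
`Λ`-Bruhat graph, computed in a field `F` via a linear embedding `emb`. -/
noncomputable def chainTerm {F : Type} [Field F] [Algebra ℚ F]
    (emb : D.V →ₗ[ℚ] F) (H : Subgroup D.W) (Lam : D.W → D.V) (w : D.W) :
    D.W → List D.W → F
  | _, [] => 1
  | t, x :: rest =>
      algebraMap ℚ F (D.coroot (D.edgeRoot H x t) (Lam x)) *
        (emb (D.act x (Lam x) - D.act w (Lam x)))⁻¹ *
        chainTerm emb H Lam w x rest

/-- the Bruhat order on cosets: `aH ≤ bH` -/
def cosetLE (H : Subgroup D.W) (a b : D.W) : Prop :=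
  ∃ x y, D.SameCoset H a x ∧ D.SameCoset H b y ∧ D.bruhatLE x y

/-- the (standard) parabolic subgroup generated by simple reflections in `J` -/
def parab (J : Set D.I) : Subgroup D.W := Subgroup.closure (D.s '' J)

/-- `X*(T)_P`: integral weights orthogonal to all coroots of `W_P`,
i.e. to `γ∨` for all positive roots `γ` in the span of the simple roots of `P` -/
def OrthWeightP (J : Set D.I) (lam : D.V) : Prop :=
  D.IsIntegral lam ∧
    ∀ γ, D.IsPosRoot γ → γ ∈ Submodule.span ℚ (D.simple '' J) → D.coroot γ lam = 0

/-- an admissible function `Λ : [v,w]^P → X*(T)_P` -/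
def Admissible (J : Set D.I) (v w : D.W) (Lam : D.W → D.V) : Prop :=
  (∀ x, D.IsMinRep (D.parab J) x → D.bruhatLE v x → D.bruhatLE x w →
      D.OrthWeightP J (Lam x)) ∧
  (∀ x, D.IsMinRep (D.parab J) x → D.bruhatLE v x → D.bruhatLE x w → x ≠ w →
      D.act x (Lam x) ≠ D.act w (Lam x))

/-- the subword of `l` with letters at the positions in `S`, in increasing order -/
def subwordF (l : List D.I) (S : Finset (Fin l.length)) : List D.I :=
  ((List.finRange l.length).filter fun j => j ∈ S).map l.get

/-- `β_j = s_{i_1} ⋯ s_{i_{j-1}}(α_{i_j})` attached to a reduced word `l` -/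
noncomputable def refRoot (l : List D.I) (j : Fin l.length) : D.V :=
  D.act (D.wordProd (l.take j.val)) (D.simple (l.get j))

/-- the Weyl group is simply laced: the Cartan pairing is symmetric -/
def SimplyLaced : Prop :=
  ∀ i j, D.coroot (D.simple i) (D.simple j) = D.coroot (D.simple j) (D.simple i)

/-- generating relation of the heap order of the word `l`:
`p_j < p_k` whenever `j < k` and `s_{i_j}`, `s_{i_k}` do not commute -/
def heapCovers (l : List D.I) (j k : Fin l.length) : Prop :=
  (j : ℕ) < (k : ℕ) ∧ D.s (l.get j) * D.s (l.get k) ≠ D.s (l.get k) * D.s (l.get j)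

/-- the heap order of the word `l`: the minimal partial order generated by
`heapCovers` -/
def heapLE (l : List D.I) : Fin l.length → Fin l.length → Prop :=
  Relation.ReflTransGen (D.heapCovers l)

/-- strict heap order -/
def heapLT (l : List D.I) (j k : Fin l.length) : Prop := D.heapLE l j k ∧ j ≠ k

/-- `F` is an order filter of the heap `H(w)` of the word `l` -/
def IsHeapFilter (l : List D.I) (F : Finset (Fin l.length)) : Prop :=
  ∀ j k, j ∈ F → D.heapLE l j k → k ∈ F

/-- `i` and `j` are joined by an edge of the Dynkin diagram -/
def adjDynkin (i j : D.I) : Prop := i ≠ j ∧ D.s i * D.s j ≠ D.s j * D.s i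

/-- an elementary excitation `A ▷ B` of subsets of the heap of the word `l` -/
def Excite (l : List D.I) (A B : Finset (Fin l.length)) : Prop :=
  ∃ p q, D.heapLT l p q ∧ l.get p = l.get q ∧ q ∈ A ∧ p ∈ B ∧
    A.erase q = B.erase p ∧
    (∀ z, D.heapLT l p z → D.heapLT l z q → l.get z ≠ l.get p) ∧
    ∀ u ∈ A, D.heapLE l p u → D.heapLE l u q → ¬ D.adjDynkin (l.get p) (l.get u)

/-- `A` is an excited diagram of `F` in the heap of the word `l`,
i.e. `A ∈ E_{H(w)}(F)` -/
def InExcited (l : List D.I) (F A : Finset (Fin l.length)) : Prop :=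
  Relation.ReflTransGen (D.Excite l) F A

end WeylSetting

namespace WeylSetting

variable (D : WeylSetting)

/-! ### Basic word and length lemmas -/

lemma wordProd_nil : D.wordProd [] = 1 := rfl

lemma wordProd_cons (i : D.I) (l : List D.I) :
    D.wordProd (i :: l) = D.s i * D.wordProd l := by
  simp [wordProd]

lemma wordProd_append (a b : List D.I) :
    D.wordProd (a ++ b) = D.wordProd a * D.wordProd b := by
  simp [wordProd]

lemma exists_word (g : D.W) : ∃ l : List D.I, D.wordProd l = g := by
  obtain ⟨l, hl⟩ := D.generated g
  exact ⟨l, hl.symm⟩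

lemma length_le_of_word {g : D.W} {l : List D.I} (h : D.wordProd l = g) :
    D.length g ≤ l.length :=
  Nat.sInf_le ⟨l, rfl, h⟩

lemma exists_reduced_word (g : D.W) :
    ∃ l : List D.I, D.wordProd l = g ∧ l.length = D.length g := by
  have hne : {n | ∃ l : List D.I, l.length = n ∧ D.wordProd l = g}.Nonempty := by
    obtain ⟨l, hl⟩ := D.exists_word g
    exact ⟨l.length, l, rfl, hl⟩
  obtain ⟨l, hl1, hl2⟩ := Nat.sInf_mem hne
  exact ⟨l, hl2, hl1⟩

lemma length_one : D.length 1 = 0 :=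
  Nat.le_zero.mp (D.length_le_of_word (D.wordProd_nil))

lemma eq_one_of_length_eq_zero {g : D.W} (h : D.length g = 0) : g = 1 := by
  obtain ⟨l, hl, hlen⟩ := D.exists_reduced_word g
  rw [h] at hlen
  rw [List.length_eq_zero_iff] at hlen
  rw [hlen] at hl
  exact hl.symm.trans (D.wordProd_nil)

lemma length_mul_le (a b : D.W) : D.length (a * b) ≤ D.length a + D.length b := by
  obtain ⟨la, hla, hlena⟩ := D.exists_reduced_word a
  obtain ⟨lb, hlb, hlenb⟩ := D.exists_reduced_word b
  have : D.wordProd (la ++ lb) = a * b := by rw [D.wordProd_append, hla, hlb]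
  calc D.length (a * b) ≤ (la ++ lb).length := D.length_le_of_word this
  _ = D.length a + D.length b := by rw [List.length_append, hlena, hlenb]

/-! ### Action lemmas -/

lemma act_one (v : D.V) : D.act 1 v = v := by rw [map_one]; rfl

lemma act_mul (a b : D.W) (v : D.V) : D.act (a * b) v = D.act a (D.act b v) := by
  rw [map_mul]; rfl

lemma act_inv_act (a : D.W) (v : D.V) : D.act a⁻¹ (D.act a v) = v := by
  rw [← D.act_mul, inv_mul_cancel, D.act_one]

lemma act_act_inv (a : D.W) (v : D.V) : D.act a (D.act a⁻¹ v) = v := by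
  rw [← D.act_mul, mul_inv_cancel, D.act_one]

lemma act_ext {a b : D.W} (h : ∀ v, D.act a v = D.act b v) : a = b := by
  have h1 : a * b⁻¹ = 1 := by
    apply D.act_faithful
    intro v
    rw [D.act_mul, h, D.act_act_inv]
  exact mul_inv_eq_one.mp h1

/-! ### Coordinates and the height functional -/

noncomputable def spanS : Submodule ℚ D.V := Submodule.span ℚ (Set.range D.simple)

noncomputable def sCompl : Submodule ℚ D.V := Classical.choose (exists_isCompl D.spanS)

lemma isCompl_sCompl : IsCompl D.spanS D.sCompl := Classical.choose_spec (exists_isCompl D.spanS)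

noncomputable def projS : D.V →ₗ[ℚ] D.spanS :=
  Submodule.linearProjOfIsCompl _ _ D.isCompl_sCompl

noncomputable def coords : D.V →ₗ[ℚ] (D.I →₀ ℚ) :=
  D.simple_indep.repr ∘ₗ D.projS

lemma coords_simple (i : D.I) : D.coords (D.simple i) = Finsupp.single i 1 := by
  have hmem : D.simple i ∈ D.spanS := Submodule.subset_span ⟨i, rfl⟩
  have h1 : D.projS (D.simple i) = ⟨D.simple i, hmem⟩ :=
    Submodule.linearProjOfIsCompl_apply_left D.isCompl_sCompl ⟨D.simple i, hmem⟩
  have : D.coords (D.simple i) = D.simple_indep.repr (D.projS (D.simple i)) := rfl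
  rw [this, h1]
  exact D.simple_indep.repr_eq_single i _ rfl

lemma coords_combo (c : D.I → ℚ) (j : D.I) :
    D.coords (∑ i, c i • D.simple i) j = c j := by
  rw [map_sum]
  rw [Finsupp.finset_sum_apply]
  have : ∀ i, (D.coords (c i • D.simple i)) j = if i = j then c i else 0 := by
    intro i
    rw [map_smul, D.coords_simple]
    simp [Finsupp.single_apply]
  rw [Finset.sum_congr rfl (fun i _ => this i)]
  simp

noncomputable def phi (v : D.V) : ℚ := ∑ i, D.coords v i

lemma phi_combo (c : D.I → ℚ) : D.phi (∑ i, c i • D.simple i) = ∑ i, c i := by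
  unfold phi
  exact Finset.sum_congr rfl (fun j _ => D.coords_combo c j)

lemma phi_add (u v : D.V) : D.phi (u + v) = D.phi u + D.phi v := by
  unfold phi
  rw [map_add]
  simp [Finsupp.add_apply, Finset.sum_add_distrib]

lemma phi_neg (v : D.V) : D.phi (-v) = - D.phi v := by
  unfold phi
  rw [map_neg]
  simp [Finsupp.neg_apply, Finset.sum_neg_distrib]

lemma phi_sub (u v : D.V) : D.phi (u - v) = D.phi u - D.phi v := by
  rw [sub_eq_add_neg, D.phi_add, D.phi_neg, sub_eq_add_neg]

lemma phi_smul (c : ℚ) (v : D.V) : D.phi (c • v) = c * D.phi v := by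
  unfold phi
  rw [map_smul]
  simp [Finsupp.smul_apply, Finset.mul_sum, smul_eq_mul]

/-! ### Positivity of roots -/

lemma root_ne_zero {β : D.V} (h : β ∈ D.roots) : β ≠ 0 := by
  intro h0
  have h2 := D.coroot_self β h
  rw [h0] at h2
  rw [map_zero] at h2
  norm_num at h2

lemma isPosRoot_simple (i : D.I) : D.IsPosRoot (D.simple i) := by
  refine ⟨D.simple_mem i, fun j => if j = i then 1 else 0, fun j => by positivity, ?_⟩
  simp [ite_smul]

lemma posCoeff_rep {β : D.V} (h : D.IsPosRoot β) :
    β = ∑ i, (D.posCoeff β i : ℚ) • D.simple i :=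
  D.posCoeff_spec β h.1 h.2

lemma phi_posRoot_eq {β : D.V} (h : D.IsPosRoot β) :
    D.phi β = ((∑ i, D.posCoeff β i : ℕ) : ℚ) := by
  conv_lhs => rw [D.posCoeff_rep h]
  rw [D.phi_combo]
  push_cast
  rfl

lemma one_le_phi_posRoot {β : D.V} (h : D.IsPosRoot β) : 1 ≤ D.phi β := by
  rw [D.phi_posRoot_eq h]
  have : (∑ i, D.posCoeff β i : ℕ) ≠ 0 := by
    intro h0
    apply D.root_ne_zero h.1
    have hall : ∀ i ∈ Finset.univ, D.posCoeff β i = 0 := by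
      intro i _
      exact (Finset.sum_eq_zero_iff.mp h0) i (Finset.mem_univ i)
    have := D.posCoeff_rep h
    rw [this]
    apply Finset.sum_eq_zero
    intro i _
    rw [hall i (Finset.mem_univ i)]
    simp
  exact_mod_cast Nat.one_le_iff_ne_zero.mpr this

lemma pos_or_neg_root {β : D.V} (h : β ∈ D.roots) :
    D.IsPosRoot β ∨ D.IsPosRoot (-β) := by
  rcases D.root_pos_or_neg β h with h1 | h1
  · exact Or.inl ⟨h, h1⟩
  · exact Or.inr ⟨D.roots_neg β h, h1.imp (fun c hc => ⟨hc.1, by rw [← hc.2]⟩)⟩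

lemma not_posRoot_neg {β : D.V} (h : D.IsPosRoot β) : ¬ D.IsPosRoot (-β) := by
  intro h2
  have h1 := D.one_le_phi_posRoot h
  have h3 := D.one_le_phi_posRoot h2
  rw [D.phi_neg] at h3
  linarith

/-! ### The invariant form -/

noncomputable def form : D.V →ₗ[ℚ] D.V →ₗ[ℚ] ℚ :=
  LinearMap.mk₂ ℚ (fun u v => ∑ γ ∈ D.roots, D.coroot γ u * D.coroot γ v)
    (fun u u' v => by simp [map_add, add_mul, Finset.sum_add_distrib])
    (fun c u v => by simp [map_smul, smul_eq_mul, Finset.mul_sum, mul_assoc])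
    (fun u v v' => by simp [map_add, mul_add, Finset.sum_add_distrib])
    (fun c u v => by
      simp only [map_smul, smul_eq_mul, Finset.mul_sum]
      congr 1
      ext γ
      ring)

lemma form_apply (u v : D.V) :
    D.form u v = ∑ γ ∈ D.roots, D.coroot γ u * D.coroot γ v := rfl

lemma form_symm (u v : D.V) : D.form u v = D.form v u := by
  rw [form_apply, form_apply]
  exact Finset.sum_congr rfl (fun γ _ => mul_comm _ _)

lemma form_self_pos {β : D.V} (h : β ∈ D.roots) : 0 < D.form β β := by
  have h4 : D.coroot β β * D.coroot β β = 4 := by rw [D.coroot_self β h]; norm_num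
  have hle : D.coroot β β * D.coroot β β ≤ D.form β β := by
    rw [form_apply]
    exact Finset.single_le_sum (f := fun γ => D.coroot γ β * D.coroot γ β)
      (fun γ _ => mul_self_nonneg _) h
  rw [h4] at hle
  linarith

lemma form_act (g : D.W) (u v : D.V) :
    D.form (D.act g u) (D.act g v) = D.form u v := by
  rw [form_apply, form_apply]
  apply Finset.sum_nbij' (i := fun γ => D.act g⁻¹ γ) (j := fun γ => D.act g γ)
  · intro γ hγ; exact D.roots_invariant _ _ hγ
  · intro γ hγ; exact D.roots_invariant _ _ hγ
  · intro γ _; exact D.act_act_inv g γ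
  · intro γ _; exact D.act_inv_act g γ
  · intro γ hγ
    have h1 : D.coroot γ (D.act g u) = D.coroot (D.act g⁻¹ γ) u := by
      conv_lhs => rw [← D.act_act_inv g γ]
      rw [D.coroot_equivariant g (D.act g⁻¹ γ) (D.roots_invariant _ _ hγ) u]
    have h2 : D.coroot γ (D.act g v) = D.coroot (D.act g⁻¹ γ) v := by
      conv_lhs => rw [← D.act_act_inv g γ]
      rw [D.coroot_equivariant g (D.act g⁻¹ γ) (D.roots_invariant _ _ hγ) v]
    rw [h1, h2]

lemma act_srefl_self {β : D.V} (h : β ∈ D.roots) : D.act (D.srefl β) β = -β := by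
  rw [D.srefl_apply β h, D.coroot_self β h, two_smul]
  abel

lemma coroot_mul_form {β : D.V} (h : β ∈ D.roots) (v : D.V) :
    D.coroot β v * D.form β β = 2 * D.form β v := by
  have key := D.form_act (D.srefl β) v β
  rw [D.act_srefl_self h, D.srefl_apply β h v] at key
  simp only [map_sub, map_smul, map_neg, LinearMap.sub_apply, LinearMap.smul_apply,
    LinearMap.neg_apply, smul_eq_mul] at key
  have hsymm := D.form_symm β v
  nlinarith [key, hsymm]


/-! ### Reflection identities -/

lemma srefl_sq {β : D.V} (h : β ∈ D.roots) : D.srefl β * D.srefl β = 1 := by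
  apply D.act_faithful
  intro v
  rw [D.act_mul, D.srefl_apply β h v, D.srefl_apply β h, map_sub, map_smul,
    D.coroot_self β h, smul_eq_mul]
  module

lemma srefl_inv {β : D.V} (h : β ∈ D.roots) : (D.srefl β)⁻¹ = D.srefl β :=
  inv_eq_of_mul_eq_one_right (D.srefl_sq h)

lemma coroot_smul_root {β : D.V} (hβ : β ∈ D.roots) {c : ℚ} (hc : c ≠ 0)
    (hcβ : c • β ∈ D.roots) (v : D.V) : D.coroot (c • β) v = D.coroot β v / c := by
  have h1 := D.coroot_mul_form hcβ v
  have h2 := D.coroot_mul_form hβ v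
  have hF := D.form_self_pos hβ
  simp only [map_smul, LinearMap.smul_apply, smul_eq_mul] at h1
  have e1 : (D.coroot (c • β) v * c - D.coroot β v) * (c * D.form β β) = 0 := by
    linear_combination h1 - c * h2
  rcases mul_eq_zero.mp e1 with e2 | e2
  · rw [eq_div_iff hc]
    linarith
  · exact absurd e2 (mul_ne_zero hc (ne_of_gt hF))

lemma srefl_smul_eq {β : D.V} {c : ℚ} (hβ : β ∈ D.roots) (hc : c ≠ 0)
    (hcβ : c • β ∈ D.roots) : D.srefl (c • β) = D.srefl β := by
  apply D.act_ext
  intro v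
  rw [D.srefl_apply _ hcβ v, D.srefl_apply _ hβ v, D.coroot_smul_root hβ hc hcβ v,
    smul_smul, div_mul_cancel₀ _ hc]

lemma neg_eq_smul {β : D.V} : -β = (-1 : ℚ) • β := by rw [neg_smul, one_smul]

lemma srefl_neg_eq {β : D.V} (hβ : β ∈ D.roots) : D.srefl (-β) = D.srefl β := by
  have h1 : ((-1 : ℚ)) • β ∈ D.roots := by rw [← neg_eq_smul]; exact D.roots_neg β hβ
  rw [neg_eq_smul]
  exact D.srefl_smul_eq hβ (by norm_num) h1

lemma coroot_neg_root {β : D.V} (hβ : β ∈ D.roots) (v : D.V) :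
    D.coroot (-β) v = - D.coroot β v := by
  have h1 : ((-1 : ℚ)) • β ∈ D.roots := by rw [← neg_eq_smul]; exact D.roots_neg β hβ
  rw [neg_eq_smul, D.coroot_smul_root hβ (by norm_num) h1]
  field_simp

lemma coroot_act_inv {β : D.V} (g : D.W) (hβ : β ∈ D.roots) (v : D.V) :
    D.coroot (D.act g β) v = D.coroot β (D.act g⁻¹ v) := by
  conv_lhs => rw [← D.act_act_inv g v]
  exact D.coroot_equivariant g β hβ (D.act g⁻¹ v)

lemma srefl_conj (g : D.W) {β : D.V} (hβ : β ∈ D.roots) :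
    g * D.srefl β * g⁻¹ = D.srefl (D.act g β) := by
  apply D.act_ext
  intro v
  rw [D.act_mul, D.act_mul, D.srefl_apply β hβ, map_sub, map_smul,
    D.srefl_apply _ (D.roots_invariant g β hβ) v, D.act_act_inv,
    D.coroot_act_inv g hβ v]

lemma srefl_conj' (g : D.W) {β : D.V} (hβ : β ∈ D.roots) :
    g * D.srefl β = D.srefl (D.act g β) * g := by
  have := D.srefl_conj g hβ
  rw [← this]
  group

/-! ### Dominance -/

lemma coroot_pi_nonneg {pi β : D.V} (hpi : D.IsDominant pi) (h : D.IsPosRoot β) :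
    0 ≤ D.coroot β pi := by
  obtain ⟨c, hc0, hrep⟩ := h.2
  have hfv : 0 ≤ D.form β pi := by
    rw [hrep, map_sum]
    simp only [map_smul, LinearMap.sum_apply, LinearMap.smul_apply, smul_eq_mul]
    apply Finset.sum_nonneg
    intro i _
    apply mul_nonneg (hc0 i)
    have hk := D.coroot_mul_form (D.simple_mem i) pi
    have h1 : 0 ≤ D.coroot (D.simple i) pi := hpi.2 i
    have h2 := D.form_self_pos (D.simple_mem i)
    nlinarith
  have hk := D.coroot_mul_form h.1 pi
  have hF := D.form_self_pos h.1
  nlinarith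

/-! ### Roots sent to negative by a simple reflection -/

lemma exists_smul_simple {γ : D.V} (i : D.I) (hγ : D.IsPosRoot γ)
    (hneg : ¬ D.IsPosRoot (D.act (D.s i) γ)) :
    ∃ c : ℚ, 0 < c ∧ γ = c • D.simple i := by
  have hγr := hγ.1
  have hδr : D.act (D.s i) γ ∈ D.roots := D.roots_invariant _ _ hγr
  have hnd : D.IsPosRoot (-(D.act (D.s i) γ)) := (D.pos_or_neg_root hδr).resolve_left hneg
  obtain ⟨c, hc0, hcrep⟩ := hγ.2
  obtain ⟨d, hd0, hdrep⟩ := hnd.2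
  have hform : D.act (D.s i) γ = γ - D.coroot (D.simple i) γ • D.simple i :=
    D.srefl_apply _ (D.simple_mem i) γ
  have key : ∀ j, j ≠ i → c j = 0 := by
    intro j hj
    have e1 : D.coords γ j = c j := by rw [hcrep, D.coords_combo]
    have e3 : -(D.act (D.s i) γ) = D.coroot (D.simple i) γ • D.simple i - γ := by
      rw [hform]; abel
    have e2 : D.coords (-(D.act (D.s i) γ)) j = d j := by rw [hdrep, D.coords_combo]
    rw [e3, map_sub, map_smul] at e2
    rw [Finsupp.sub_apply, Finsupp.smul_apply, D.coords_simple, Finsupp.single_apply,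
      if_neg (fun hij => hj hij.symm), e1] at e2
    have h1 := hd0 j
    have h2 := hc0 j
    rw [← e2] at h1
    simp only [smul_eq_mul, mul_zero, zero_sub] at h1
    linarith
  have hci : c i ≠ 0 := by
    intro h0
    apply D.root_ne_zero hγr
    rw [hcrep]
    apply Finset.sum_eq_zero
    intro j _
    by_cases hji : j = i
    · rw [hji, h0, zero_smul]
    · rw [key j hji, zero_smul]
  refine ⟨c i, lt_of_le_of_ne (hc0 i) (Ne.symm hci), ?_⟩
  rw [hcrep]
  rw [Finset.sum_eq_single i (fun j _ hj => by rw [key j hj, zero_smul])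
    (fun h => absurd (Finset.mem_univ i) h)]


/-! ### Strong exchange -/

lemma s_eq (i : D.I) : D.s i = D.srefl (D.simple i) := rfl

lemma s_mul_s (i : D.I) : D.s i * D.s i = 1 := D.srefl_sq (D.simple_mem i)

lemma wordProd_singleton (i : D.I) : D.wordProd [i] = D.s i := by
  simp [wordProd]

lemma length_s_le (i : D.I) : D.length (D.s i) ≤ 1 := by
  have := D.length_le_of_word (D.wordProd_singleton i)
  simpa using this

theorem exchange_right (l : List D.I) : ∀ (g : D.W), D.wordProd l = g →
    l.length = D.length g → ∀ {β : D.V}, D.IsPosRoot β →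
    ¬ D.IsPosRoot (D.act g β) →
    ∃ l₂, l₂.Sublist l ∧ l₂.length + 1 = l.length ∧ D.wordProd l₂ = g * D.srefl β := by
  induction l with
  | nil =>
    intro g hw hlen β hβ hneg
    have hg1 : g = 1 := by rw [← hw, D.wordProd_nil]
    rw [hg1, D.act_one] at hneg
    exact absurd hβ hneg
  | cons i m ih =>
    intro g hw hlen β hβ hneg
    have hg : g = D.s i * D.wordProd m := by rw [← hw, D.wordProd_cons]
    set g' := D.wordProd m with hg'
    have hmred : m.length = D.length g' := by
      have h1 : D.length g' ≤ m.length := D.length_le_of_word rfl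
      have h2 : D.length g ≤ D.length (D.s i) + D.length g' := by
        rw [hg]; exact D.length_mul_le _ _
      have h3 := D.length_s_le i
      simp only [List.length_cons] at hlen
      omega
    by_cases hpos : D.IsPosRoot (D.act g' β)
    · have hact : D.act g β = D.act (D.s i) (D.act g' β) := by rw [hg, D.act_mul]
      obtain ⟨c, hc, hrep⟩ := D.exists_smul_simple i hpos (by rw [← hact]; exact hneg)
      have hroots : D.act g' β ∈ D.roots := D.roots_invariant _ _ hβ.1
      have hsmul : D.srefl (D.act g' β) = D.s i := by
        rw [D.s_eq]
        rw [hrep] at hroots ⊢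
        exact D.srefl_smul_eq (D.simple_mem i) (ne_of_gt hc) hroots
      have hkey : g * D.srefl β = g' := by
        rw [hg, mul_assoc, D.srefl_conj' g' hβ.1, hsmul, ← mul_assoc, D.s_mul_s, one_mul]
      refine ⟨m, List.sublist_cons_self i m, ?_, hkey.symm⟩
      simp
    · obtain ⟨l₂, hsub, hlen₂, hword⟩ := ih g' rfl hmred hβ hpos
      refine ⟨i :: l₂, hsub.cons₂ i, ?_, ?_⟩
      · simp only [List.length_cons]; omega
      · rw [D.wordProd_cons, hword, hg, mul_assoc]

lemma length_mul_srefl_lt {g : D.W} {β : D.V} (hβ : D.IsPosRoot β)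
    (hneg : ¬ D.IsPosRoot (D.act g β)) :
    D.length (g * D.srefl β) < D.length g := by
  obtain ⟨l, hl, hlen⟩ := D.exists_reduced_word g
  obtain ⟨l₂, _, hlen₂, hword⟩ := D.exchange_right l g hl hlen hβ hneg
  have := D.length_le_of_word hword
  omega

lemma length_mul_srefl_gt {g : D.W} {β : D.V} (hβ : D.IsPosRoot β)
    (hpos : D.IsPosRoot (D.act g β)) :
    D.length g < D.length (g * D.srefl β) := by
  have hneg : ¬ D.IsPosRoot (D.act (g * D.srefl β) β) := by
    rw [D.act_mul, D.act_srefl_self hβ.1, map_neg]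
    exact D.not_posRoot_neg hpos
  have h := D.length_mul_srefl_lt hβ hneg
  rw [mul_assoc, D.srefl_sq hβ.1, mul_one] at h
  exact h

lemma act_pos_iff_length_right {g : D.W} {β : D.V} (hβ : D.IsPosRoot β) :
    D.IsPosRoot (D.act g β) ↔ D.length g < D.length (g * D.srefl β) := by
  constructor
  · exact D.length_mul_srefl_gt hβ
  · intro h
    by_contra hneg
    have := D.length_mul_srefl_lt hβ hneg
    omega

lemma wordProd_reverse (l : List D.I) : D.wordProd l.reverse = (D.wordProd l)⁻¹ := by
  induction l with
  | nil => simp [wordProd]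
  | cons i m ih =>
    rw [List.reverse_cons, D.wordProd_append, ih, D.wordProd_singleton, D.wordProd_cons,
      mul_inv_rev]
    congr 1
    exact (D.srefl_inv (D.simple_mem i)).symm

lemma length_inv (g : D.W) : D.length g⁻¹ = D.length g := by
  have key : ∀ h : D.W, D.length h⁻¹ ≤ D.length h := by
    intro h
    obtain ⟨l, hl, hlen⟩ := D.exists_reduced_word h
    have hw : D.wordProd l.reverse = h⁻¹ := by rw [D.wordProd_reverse, hl]
    have := D.length_le_of_word hw
    simpa [hlen] using this
  have h1 := key g
  have h2 := key g⁻¹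
  rw [inv_inv] at h2
  omega

lemma length_srefl_mul_lt {g : D.W} {β : D.V} (hβ : D.IsPosRoot β)
    (hneg : ¬ D.IsPosRoot (D.act g⁻¹ β)) :
    D.length (D.srefl β * g) < D.length g := by
  have h := D.length_mul_srefl_lt (g := g⁻¹) hβ hneg
  have e : (g⁻¹ * D.srefl β)⁻¹ = D.srefl β * g := by
    rw [mul_inv_rev, inv_inv, D.srefl_inv hβ.1]
  have h2 : D.length (D.srefl β * g) = D.length (g⁻¹ * D.srefl β) := by
    rw [← D.length_inv (g⁻¹ * D.srefl β), e]
  have h3 := D.length_inv g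
  omega

lemma act_inv_pos_iff_length_left {g : D.W} {β : D.V} (hβ : D.IsPosRoot β) :
    D.IsPosRoot (D.act g⁻¹ β) ↔ D.length g < D.length (D.srefl β * g) := by
  rw [D.act_pos_iff_length_right (g := g⁻¹) hβ]
  have e : (g⁻¹ * D.srefl β)⁻¹ = D.srefl β * g := by
    rw [mul_inv_rev, inv_inv, D.srefl_inv hβ.1]
  have h2 : D.length (D.srefl β * g) = D.length (g⁻¹ * D.srefl β) := by
    rw [← D.length_inv (g⁻¹ * D.srefl β), e]
  have h3 := D.length_inv g
  omega

lemma act_root (g : D.W) {β : D.V} (h : β ∈ D.roots) : D.act g β ∈ D.roots :=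
  D.roots_invariant g β h

lemma neg_posRoot_of_not {β : D.V} (h : β ∈ D.roots) (hn : ¬ D.IsPosRoot β) :
    D.IsPosRoot (-β) := (D.pos_or_neg_root h).resolve_left hn


/-! ### Reduced words -/

def IsRW (l : List D.I) : Prop := D.length (D.wordProd l) = l.length

lemma isRW_nil : D.IsRW [] := by
  unfold IsRW
  rw [D.wordProd_nil, D.length_one]
  rfl

lemma isRW_of_reduced {l : List D.I} {g : D.W} (h : D.wordProd l = g)
    (hl : l.length = D.length g) : D.IsRW l := by
  unfold IsRW
  rw [h, hl]

lemma exists_isRW (g : D.W) : ∃ l, D.IsRW l ∧ D.wordProd l = g := by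
  obtain ⟨l, hl, hlen⟩ := D.exists_reduced_word g
  exact ⟨l, D.isRW_of_reduced hl hlen, hl⟩

lemma isRW_drop {l : List D.I} (h : D.IsRW l) (k : ℕ) : D.IsRW (l.drop k) := by
  have hsplit : D.wordProd l = D.wordProd (l.take k) * D.wordProd (l.drop k) := by
    rw [← D.wordProd_append, List.take_append_drop]
  have h1 : D.length (D.wordProd (l.drop k)) ≤ (l.drop k).length := D.length_le_of_word rfl
  have h2 : D.length (D.wordProd (l.take k)) ≤ (l.take k).length := D.length_le_of_word rfl
  have h3 : D.length (D.wordProd l) ≤ D.length (D.wordProd (l.take k)) +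
      D.length (D.wordProd (l.drop k)) := by
    rw [hsplit]; exact D.length_mul_le _ _
  have h4 : (l.take k).length + (l.drop k).length = l.length := by
    rw [← List.length_append, List.take_append_drop]
  unfold IsRW at h ⊢
  omega

lemma isRW_take {l : List D.I} (h : D.IsRW l) (k : ℕ) : D.IsRW (l.take k) := by
  have hsplit : D.wordProd l = D.wordProd (l.take k) * D.wordProd (l.drop k) := by
    rw [← D.wordProd_append, List.take_append_drop]
  have h1 : D.length (D.wordProd (l.drop k)) ≤ (l.drop k).length := D.length_le_of_word rfl
  have h2 : D.length (D.wordProd (l.take k)) ≤ (l.take k).length := D.length_le_of_word rfl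
  have h3 : D.length (D.wordProd l) ≤ D.length (D.wordProd (l.take k)) +
      D.length (D.wordProd (l.drop k)) := by
    rw [hsplit]; exact D.length_mul_le _ _
  have h4 : (l.take k).length + (l.drop k).length = l.length := by
    rw [← List.length_append, List.take_append_drop]
  unfold IsRW at h ⊢
  omega

lemma isRW_cons {i : D.I} {m : List D.I} (h : D.IsRW (i :: m)) : D.IsRW m := by
  have := D.isRW_drop h 1
  simpa using this

lemma isRW_reverse {l : List D.I} (h : D.IsRW l) : D.IsRW l.reverse := by
  unfold IsRW at h ⊢
  rw [D.wordProd_reverse, D.length_inv, List.length_reverse]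
  exact h

/-! ### Basic Bruhat order lemmas -/

lemma bruhatLE_refl (x : D.W) : D.bruhatLE x x := Relation.ReflTransGen.refl

lemma bruhatLE_trans {a b c : D.W} (h1 : D.bruhatLE a b) (h2 : D.bruhatLE b c) :
    D.bruhatLE a c := Relation.ReflTransGen.trans h1 h2

lemma length_le_of_bruhatLE {a b : D.W} (h : D.bruhatLE a b) :
    D.length a ≤ D.length b := by
  induction h with
  | refl => exact le_refl _
  | tail _ step ih => exact le_trans ih (le_of_lt step.2)

lemma eq_of_bruhatLE_length {a b : D.W} (h : D.bruhatLE a b)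
    (hl : D.length b ≤ D.length a) : a = b := by
  rcases (Relation.ReflTransGen.cases_tail h) with rfl | ⟨c, hac, step⟩
  · rfl
  · have := D.length_le_of_bruhatLE hac
    have := step.2
    omega

lemma bruhatLE_cover {a : D.W} {β : D.V} (hβ : D.IsPosRoot β)
    (hlen : D.length a < D.length (D.srefl β * a)) :
    D.bruhatLE a (D.srefl β * a) :=
  Relation.ReflTransGen.single ⟨⟨β, hβ, rfl⟩, hlen⟩

lemma exists_posize {β : D.V} (h : β ∈ D.roots) :
    ∃ β', D.IsPosRoot β' ∧ D.srefl β' = D.srefl β := by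
  rcases D.pos_or_neg_root h with hp | hp
  · exact ⟨β, hp, rfl⟩
  · exact ⟨-β, hp, D.srefl_neg_eq h⟩

lemma bruhatLE_cover' {a : D.W} {β : D.V} (hβ : β ∈ D.roots)
    (hlen : D.length a < D.length (D.srefl β * a)) :
    D.bruhatLE a (D.srefl β * a) := by
  obtain ⟨β', hβ', he⟩ := D.exists_posize hβ
  rw [← he] at hlen ⊢
  exact D.bruhatLE_cover hβ' hlen

lemma bruhatLE_rcover {a : D.W} {β : D.V} (hβ : β ∈ D.roots)
    (hlen : D.length a < D.length (a * D.srefl β)) :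
    D.bruhatLE a (a * D.srefl β) := by
  have he : a * D.srefl β = D.srefl (D.act a β) * a := D.srefl_conj' a hβ
  rw [he] at hlen ⊢
  exact D.bruhatLE_cover' (D.act_root a hβ) hlen

lemma bruhatLE_cover_s {a : D.W} {i : D.I}
    (hlen : D.length a < D.length (D.s i * a)) :
    D.bruhatLE a (D.s i * a) := by
  have h := D.bruhatLE_cover (a := a) (hβ := D.isPosRoot_simple i)
    (by rw [← D.s_eq]; exact hlen)
  rwa [← D.s_eq] at h

lemma bruhatLE_rcover_s {a : D.W} {i : D.I}
    (hlen : D.length a < D.length (a * D.s i)) :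
    D.bruhatLE a (a * D.s i) := by
  have h := D.bruhatLE_rcover (a := a) (β := D.simple i) (D.simple_mem i)
    (by rw [← D.s_eq]; exact hlen)
  rwa [← D.s_eq] at h

lemma bruhatLE_inv {a b : D.W} (h : D.bruhatLE a b) : D.bruhatLE a⁻¹ b⁻¹ := by
  induction h with
  | refl => exact D.bruhatLE_refl _
  | @tail x y hax hxy ih =>
    obtain ⟨⟨β, hβ, heq⟩, hlen⟩ := hxy
    subst heq
    refine D.bruhatLE_trans ih ?_
    have he : (D.srefl β * x)⁻¹ = x⁻¹ * D.srefl β := by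
      rw [mul_inv_rev, D.srefl_inv hβ.1]
    rw [he]
    apply D.bruhatLE_rcover hβ.1
    rw [← he, D.length_inv, D.length_inv]
    exact hlen

lemma s_ne_one (i : D.I) : D.s i ≠ 1 := by
  intro h
  have h1 : D.act (D.s i) (D.simple i) = -(D.simple i) :=
    D.act_srefl_self (D.simple_mem i)
  rw [h, D.act_one] at h1
  have h2 : (2 : ℚ) • D.simple i = 0 := by
    rw [two_smul]
    nth_rewrite 1 [h1]
    abel
  rcases smul_eq_zero.mp h2 with h3 | h3
  · norm_num at h3
  · exact D.root_ne_zero (D.simple_mem i) h3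

lemma length_s (i : D.I) : D.length (D.s i) = 1 := by
  have h1 := D.length_s_le i
  have h2 : D.length (D.s i) ≠ 0 := fun h => D.s_ne_one i (D.eq_one_of_length_eq_zero h)
  omega

lemma exists_right_descent {x : D.W} (hx : x ≠ 1) :
    ∃ i, D.length (x * D.s i) < D.length x := by
  obtain ⟨l, hRW, hw⟩ := D.exists_isRW x
  rcases List.eq_nil_or_concat l with rfl | ⟨m, i, rfl⟩
  · exact absurd (hw.symm.trans D.wordProd_nil) hx
  · simp only [List.concat_eq_append] at hRW hw
    refine ⟨i, ?_⟩
    have hx' : x * D.s i = D.wordProd m := by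
      rw [← hw, D.wordProd_append, D.wordProd_singleton, mul_assoc, D.s_mul_s, mul_one]
    have h1 : D.length (x * D.s i) ≤ m.length := by
      rw [hx']; exact D.length_le_of_word rfl
    have h2 : D.length x = m.length + 1 := by
      rw [← hw]
      have := hRW
      unfold IsRW at this
      simpa using this
    omega

lemma one_le_bruhat (x : D.W) : D.bruhatLE 1 x := by
  generalize hn : D.length x = n
  induction n using Nat.strong_induction_on generalizing x with
  | _ n ih =>
    by_cases hx : x = 1
    · rw [hx]; exact D.bruhatLE_refl 1
    · obtain ⟨i, hi⟩ := D.exists_right_descent hx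
      have hrec : D.bruhatLE 1 (x * D.s i) :=
        ih (D.length (x * D.s i)) (by omega) (x * D.s i) rfl
      have he : (x * D.s i) * D.s i = x := by rw [mul_assoc, D.s_mul_s, mul_one]
      have hcov : D.bruhatLE (x * D.s i) x := by
        have h := D.bruhatLE_rcover_s (a := x * D.s i) (i := i) (by rw [he]; omega)
        rwa [he] at h
      exact D.bruhatLE_trans hrec hcov

/-! ### Weak order basics -/

lemma weakLE_refl (x : D.W) : D.weakLE x x := by
  unfold weakLE
  rw [mul_inv_cancel, D.length_one]
  omega

lemma weakLE_trans {a b c : D.W} (h1 : D.weakLE a b) (h2 : D.weakLE b c) :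
    D.weakLE a c := by
  unfold weakLE at h1 h2 ⊢
  have e1 : c * a⁻¹ = (c * b⁻¹) * (b * a⁻¹) := by group
  have le1 : D.length (c * a⁻¹) ≤ D.length (c * b⁻¹) + D.length (b * a⁻¹) := by
    rw [e1]; exact D.length_mul_le _ _
  have le2 : D.length c ≤ D.length (c * a⁻¹) + D.length a := by
    have e2 : c = (c * a⁻¹) * a := by group
    nth_rewrite 1 [e2]
    exact D.length_mul_le _ _
  omega

lemma bruhat_of_word_add : ∀ (l : List D.I) (a : D.W),
    D.length (D.wordProd l * a) = l.length + D.length a →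
    D.bruhatLE a (D.wordProd l * a) := by
  intro l
  induction l with
  | nil =>
    intro a _
    rw [D.wordProd_nil, one_mul]
    exact D.bruhatLE_refl a
  | cons i m ih =>
    intro a hlen
    have e1 : D.wordProd (i :: m) * a = D.s i * (D.wordProd m * a) := by
      rw [D.wordProd_cons, mul_assoc]
    have h1 : D.length (D.wordProd m * a) ≤ m.length + D.length a := by
      calc D.length (D.wordProd m * a) ≤ D.length (D.wordProd m) + D.length a :=
        D.length_mul_le _ _
      _ ≤ m.length + D.length a := by
        have := D.length_le_of_word (l := m) rfl; omega
    have h2 : D.length (D.wordProd (i :: m) * a) ≤ 1 + D.length (D.wordProd m * a) := by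
      rw [e1]
      calc D.length (D.s i * (D.wordProd m * a)) ≤ D.length (D.s i) +
          D.length (D.wordProd m * a) := D.length_mul_le _ _
      _ ≤ 1 + D.length (D.wordProd m * a) := by
        have := D.length_s_le i; omega
    simp only [List.length_cons] at hlen
    have h3 : D.length (D.wordProd m * a) = m.length + D.length a := by omega
    refine D.bruhatLE_trans (ih a h3) ?_
    have hc := D.bruhatLE_cover_s (a := D.wordProd m * a) (i := i) (by rw [← e1]; omega)
    rwa [← e1] at hc

lemma weakLE_bruhatLE {a b : D.W} (h : D.weakLE a b) : D.bruhatLE a b := by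
  obtain ⟨l, hRW, hw⟩ := D.exists_isRW (b * a⁻¹)
  have hb : D.wordProd l * a = b := by rw [hw]; group
  have hlen : D.length (D.wordProd l * a) = l.length + D.length a := by
    rw [hb]
    unfold weakLE at h
    unfold IsRW at hRW
    rw [hw] at hRW
    omega
  have hres := D.bruhat_of_word_add l a hlen
  rwa [hb] at hres


/-! ### Deletion and the subword property -/

lemma s_inv (i : D.I) : (D.s i)⁻¹ = D.s i := D.srefl_inv (D.simple_mem i)

lemma exchange_left {l : List D.I} (hRW : D.IsRW l) {β : D.V} (hβ : D.IsPosRoot β)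
    (hneg : ¬ D.IsPosRoot (D.act (D.wordProd l)⁻¹ β)) :
    ∃ l₂, l₂.Sublist l ∧ l₂.length + 1 = l.length ∧
      D.wordProd l₂ = D.srefl β * D.wordProd l := by
  have hrev : D.IsRW l.reverse := D.isRW_reverse hRW
  have hw : D.wordProd l.reverse = (D.wordProd l)⁻¹ := D.wordProd_reverse l
  have hlenrev : l.reverse.length = D.length ((D.wordProd l)⁻¹) := by
    have := hrev
    unfold IsRW at this
    rw [hw] at this
    omega
  obtain ⟨m, hsub, hlen, hword⟩ :=
    D.exchange_right l.reverse ((D.wordProd l)⁻¹) hw hlenrev hβ hneg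
  refine ⟨m.reverse, ?_, ?_, ?_⟩
  · have h1 := hsub.reverse
    simpa using h1
  · simp only [List.length_reverse] at hlen ⊢
    omega
  · rw [D.wordProd_reverse, hword, mul_inv_rev, inv_inv, D.srefl_inv hβ.1]

lemma length_s_mul_lt_of_not_pos {x : D.W} {i : D.I}
    (h : ¬ D.IsPosRoot (D.act x⁻¹ (D.simple i))) :
    D.length (D.s i * x) < D.length x := by
  have := D.length_srefl_mul_lt (g := x) (D.isPosRoot_simple i) h
  rwa [← D.s_eq] at this

lemma length_s_mul_gt_of_pos {x : D.W} {i : D.I}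
    (h : D.IsPosRoot (D.act x⁻¹ (D.simple i))) :
    D.length x < D.length (D.s i * x) := by
  have := (D.act_inv_pos_iff_length_left (g := x) (D.isPosRoot_simple i)).mp h
  rwa [← D.s_eq] at this

lemma s_mul_up_or_down (x : D.W) (i : D.I) :
    D.length (D.s i * x) = D.length x + 1 ∨ D.length (D.s i * x) + 1 = D.length x := by
  have hub : D.length (D.s i * x) ≤ 1 + D.length x := by
    calc D.length (D.s i * x) ≤ D.length (D.s i) + D.length x := D.length_mul_le _ _
    _ ≤ 1 + D.length x := by have := D.length_s_le i; omega
  have hlb : D.length x ≤ 1 + D.length (D.s i * x) := by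
    have e : x = D.s i * (D.s i * x) := by rw [← mul_assoc, D.s_mul_s, one_mul]
    calc D.length x = D.length (D.s i * (D.s i * x)) := by rw [← e]
    _ ≤ D.length (D.s i) + D.length (D.s i * x) := D.length_mul_le _ _
    _ ≤ 1 + D.length (D.s i * x) := by have := D.length_s_le i; omega
  by_cases hpos : D.IsPosRoot (D.act x⁻¹ (D.simple i))
  · have := D.length_s_mul_gt_of_pos hpos; omega
  · have := D.length_s_mul_lt_of_not_pos hpos; omega

lemma exists_reduced_sublist (l : List D.I) :
    ∃ l', l'.Sublist l ∧ D.IsRW l' ∧ D.wordProd l' = D.wordProd l := by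
  generalize hn : l.length = n
  induction n using Nat.strong_induction_on generalizing l with
  | _ n ih =>
  cases l with
  | nil => exact ⟨[], List.Sublist.refl _, D.isRW_nil, rfl⟩
  | cons i m =>
    have hmn : m.length < n := by simp only [List.length_cons] at hn; omega
    obtain ⟨m', hsub', hRW', hprod'⟩ := ih m.length hmn m rfl
    by_cases hpos : D.IsPosRoot (D.act (D.wordProd m')⁻¹ (D.simple i))
    · refine ⟨i :: m', hsub'.cons₂ i, ?_, ?_⟩
      · unfold IsRW
        rw [D.wordProd_cons]
        have hgt := D.length_s_mul_gt_of_pos hpos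
        have hle : D.length (D.s i * D.wordProd m') ≤ 1 + D.length (D.wordProd m') := by
          calc D.length (D.s i * D.wordProd m') ≤ D.length (D.s i) +
              D.length (D.wordProd m') := D.length_mul_le _ _
          _ ≤ 1 + D.length (D.wordProd m') := by have := D.length_s_le i; omega
        have hm' : D.length (D.wordProd m') = m'.length := hRW'
        simp only [List.length_cons]
        omega
      · rw [D.wordProd_cons, D.wordProd_cons, hprod']
    · obtain ⟨m₂, hsub₂, hlen₂, hprod₂⟩ :=
        D.exchange_left hRW' (D.isPosRoot_simple i) hpos
      have hm₂n : m₂.length < n := by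
        have h1 := hsub₂.length_le
        have h2 := hsub'.length_le
        simp only [List.length_cons] at hn
        omega
      obtain ⟨l₃, hsub₃, hRW₃, hprod₃⟩ := ih m₂.length hm₂n m₂ rfl
      refine ⟨l₃, ?_, hRW₃, ?_⟩
      · exact ((hsub₃.trans hsub₂).trans hsub').cons i
      · rw [hprod₃, hprod₂, D.wordProd_cons, hprod', D.s_eq]

theorem subword_of_bruhatLE {v w : D.W} (h : D.bruhatLE v w) :
    ∀ l, D.IsRW l → D.wordProd l = w →
    ∃ l', l'.Sublist l ∧ D.IsRW l' ∧ D.wordProd l' = v := by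
  generalize hn : D.length w = n
  induction n using Nat.strong_induction_on generalizing v w with
  | _ n ih =>
  intro l hRW hword
  rcases Relation.ReflTransGen.cases_tail h with rfl | ⟨x, hvx, step⟩
  · exact ⟨l, List.Sublist.refl _, hRW, hword⟩
  · obtain ⟨⟨β, hβ, heq⟩, hlt⟩ := step
    have hx : x = D.srefl β * w := by
      rw [heq, ← mul_assoc, D.srefl_sq hβ.1, one_mul]
    have hneg : ¬ D.IsPosRoot (D.act w⁻¹ β) := by
      intro hpos
      have := (D.act_inv_pos_iff_length_left (g := w) hβ).mp hpos
      rw [← hx] at this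
      omega
    obtain ⟨l₂, hsub₂, _, hprod₂⟩ := D.exchange_left hRW hβ (by rw [hword]; exact hneg)
    rw [hword, ← hx] at hprod₂
    obtain ⟨l₃, hsub₃, hRW₃, hprod₃⟩ := D.exists_reduced_sublist l₂
    rw [hprod₂] at hprod₃
    obtain ⟨l₄, hsub₄, hRW₄, hprod₄⟩ :=
      ih (D.length x) (by rw [← hn]; exact hlt) hvx rfl l₃ hRW₃ hprod₃
    exact ⟨l₄, (hsub₄.trans hsub₃).trans hsub₂, hRW₄, hprod₄⟩

/-! ### The A/B joint induction: subwords are Bruhat-below, and the Z-property -/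

def Ap (n : ℕ) : Prop := ∀ l : List D.I, D.IsRW l → l.length ≤ n →
  ∀ l', l'.Sublist l → D.bruhatLE (D.wordProd l') (D.wordProd l)

def Bp (n : ℕ) : Prop := ∀ x : D.W, D.length x ≤ n → ∀ (i : D.I) (y : D.W),
  D.length x < D.length (D.s i * x) → D.bruhatLE y x →
  D.bruhatLE (D.s i * y) (D.s i * x)

lemma lift_of_A {n : ℕ} (hA : D.Ap n) : ∀ w, D.length w ≤ n → ∀ (i : D.I) (v : D.W),
    D.length (D.s i * w) < D.length w → D.bruhatLE v w →
    D.bruhatLE v (D.s i * w) ∨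
      (D.length (D.s i * v) < D.length v ∧ D.bruhatLE (D.s i * v) (D.s i * w)) := by
  intro w hwn i v hdesc hvw
  obtain ⟨m, hRWm, hwm⟩ := D.exists_isRW (D.s i * w)
  have hword : D.wordProd (i :: m) = w := by
    rw [D.wordProd_cons, hwm, ← mul_assoc, D.s_mul_s, one_mul]
  have hlen : D.length (D.s i * w) + 1 = D.length w := by
    have h1 : D.length w ≤ 1 + D.length (D.s i * w) := by
      have e : w = D.s i * (D.s i * w) := by rw [← mul_assoc, D.s_mul_s, one_mul]
      calc D.length w = D.length (D.s i * (D.s i * w)) := by rw [← e]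
      _ ≤ D.length (D.s i) + D.length (D.s i * w) := D.length_mul_le _ _
      _ ≤ 1 + D.length (D.s i * w) := by have := D.length_s_le i; omega
    omega
  have hRWl : D.IsRW (i :: m) := by
    unfold IsRW at hRWm ⊢
    rw [hword]
    rw [hwm] at hRWm
    simp only [List.length_cons]
    omega
  have hlenl : (i :: m).length ≤ n := by
    have : (i :: m).length = D.length w := hRWl.symm.trans (by rw [hword])
    omega
  obtain ⟨l', hsub, hRW', hprod'⟩ := D.subword_of_bruhatLE hvw (i :: m) hRWl hword
  cases hsub with
  | cons _ hsubm =>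
    left
    have := hA m (D.isRW_cons hRWl) (by simp only [List.length_cons] at hlenl; omega)
      l' hsubm
    rw [hprod', hwm] at this
    exact this
  | cons_cons _ hsubm =>
    right
    rename_i r
    have hval : D.s i * v = D.wordProd r := by
      rw [← hprod', D.wordProd_cons, ← mul_assoc, D.s_mul_s, one_mul]
    have hlv : D.length v = r.length + 1 := by
      have := hRW'
      unfold IsRW at this
      rw [hprod'] at this
      simpa using this
    have hlsv : D.length (D.s i * v) ≤ r.length := by
      rw [hval]; exact D.length_le_of_word rfl
    constructor
    · omega
    · have := hA m (D.isRW_cons hRWl) (by simp only [List.length_cons] at hlenl; omega)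
        r hsubm
      rw [← hval, hwm] at this
      exact this

lemma ABlemma : ∀ n, D.Ap n ∧ D.Bp n := by
  intro n
  induction n using Nat.strong_induction_on with
  | _ n ih =>
  constructor
  · -- Ap n
    intro l hRW hlen l' hsub
    cases l with
    | nil =>
      rw [List.sublist_nil.mp hsub]
      exact D.bruhatLE_refl _
    | cons i m =>
      have hn1 : 1 ≤ n := by simp only [List.length_cons] at hlen; omega
      have hRWm : D.IsRW m := D.isRW_cons hRW
      have hmlen : m.length ≤ n - 1 := by simp only [List.length_cons] at hlen; omega
      have hup : D.length (D.wordProd m) < D.length (D.s i * D.wordProd m) := by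
        have h1 : D.length (D.wordProd (i :: m)) = m.length + 1 := by
          have := hRW; unfold IsRW at this; simpa using this
        have h2 : D.length (D.wordProd m) = m.length := hRWm
        rw [D.wordProd_cons] at h1
        omega
      have hcov : D.bruhatLE (D.wordProd m) (D.wordProd (i :: m)) := by
        rw [D.wordProd_cons]
        exact D.bruhatLE_cover_s hup
      cases hsub with
      | cons _ hsubm =>
        exact D.bruhatLE_trans ((ih (n-1) (by omega)).1 m hRWm hmlen l' hsubm) hcov
      | cons_cons _ hsubm =>
        rename_i r
        have hB := (ih (n-1) (by omega)).2 (D.wordProd m)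
          (by rw [hRWm]; exact hmlen) i (D.wordProd r) hup
          ((ih (n-1) (by omega)).1 m hRWm hmlen r hsubm)
        rw [D.wordProd_cons, D.wordProd_cons]
        exact hB
  · -- Bp n
    intro x hx i y hup hyx
    rcases Relation.ReflTransGen.cases_tail hyx with rfl | ⟨x', hyx', step⟩
    · exact D.bruhatLE_refl _
    · obtain ⟨⟨β, hβ, heq⟩, hlt⟩ := step
      subst heq
      have hn1 : 1 ≤ n := by omega
      have hx'n : D.length x' ≤ n - 1 := by omega
      have hcovtop : D.bruhatLE (D.srefl β * x') (D.s i * (D.srefl β * x')) :=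
        D.bruhatLE_cover_s hup
      by_cases hcase : D.length x' < D.length (D.s i * x')
      · have hBy := (ih (n-1) (by omega)).2 x' hx'n i y hcase hyx'
        have e2 : D.s i * (D.srefl β * x') =
            D.srefl (D.act (D.s i) β) * (D.s i * x') := by
          rw [← mul_assoc, ← mul_assoc]
          congr 1
          exact D.srefl_conj' (D.s i) hβ.1
        have hlen2 : D.length (D.s i * x') < D.length (D.s i * (D.srefl β * x')) := by
          have h1 : D.length (D.s i * x') ≤ D.length x' + 1 := by
            rcases D.s_mul_up_or_down x' i with h | h <;> omega
          omega
        have hcov2 : D.bruhatLE (D.s i * x') (D.s i * (D.srefl β * x')) := by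
          rw [e2]
          rw [e2] at hlen2
          exact D.bruhatLE_cover' (D.act_root _ hβ.1) hlen2
        exact D.bruhatLE_trans hBy hcov2
      · have hdown : D.length (D.s i * x') + 1 = D.length x' := by
          rcases D.s_mul_up_or_down x' i with h | h <;> omega
        have hlift := D.lift_of_A (n := n - 1) (ih (n-1) (by omega)).1 x' hx'n i y
          (by omega) hyx'
        have hx''cov : D.bruhatLE (D.s i * x') x' := by
          have e : D.s i * (D.s i * x') = x' := by rw [← mul_assoc, D.s_mul_s, one_mul]
          have h := D.bruhatLE_cover_s (a := D.s i * x') (i := i) (by rw [e]; omega)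
          rwa [e] at h
        have hchain : D.bruhatLE x' (D.s i * (D.srefl β * x')) :=
          D.bruhatLE_trans (Relation.ReflTransGen.single ⟨⟨β, hβ, rfl⟩, hlt⟩) hcovtop
        rcases hlift with hy1 | ⟨_, hy2⟩
        · -- y ≤ s i * x'
          have hB2 := (ih (n-1) (by omega)).2 (D.s i * x') (by omega) i y
            (by
              have e : D.s i * (D.s i * x') = x' := by
                rw [← mul_assoc, D.s_mul_s, one_mul]
              rw [e]; omega) hy1
          have e : D.s i * (D.s i * x') = x' := by rw [← mul_assoc, D.s_mul_s, one_mul]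
          rw [e] at hB2
          exact D.bruhatLE_trans hB2 hchain
        · exact D.bruhatLE_trans hy2 (D.bruhatLE_trans hx''cov hchain)

lemma bruhat_of_sublist {l l' : List D.I} (hRW : D.IsRW l) (hsub : l'.Sublist l) :
    D.bruhatLE (D.wordProd l') (D.wordProd l) :=
  (D.ABlemma l.length).1 l hRW le_rfl l' hsub

lemma bruhat_smul_mono {x y : D.W} {i : D.I} (hup : D.length x < D.length (D.s i * x))
    (h : D.bruhatLE y x) : D.bruhatLE (D.s i * y) (D.s i * x) :=
  (D.ABlemma (D.length x)).2 x le_rfl i y hup h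

lemma bruhat_lift {w v : D.W} {i : D.I} (hdesc : D.length (D.s i * w) < D.length w)
    (h : D.bruhatLE v w) :
    D.bruhatLE v (D.s i * w) ∨
      (D.length (D.s i * v) < D.length v ∧ D.bruhatLE (D.s i * v) (D.s i * w)) :=
  D.lift_of_A (n := D.length w) (D.ABlemma (D.length w)).1 w le_rfl i v hdesc h

lemma bruhat_smul_mono_right {x y : D.W} {k : D.I}
    (hup : D.length x < D.length (x * D.s k)) (h : D.bruhatLE y x) :
    D.bruhatLE (y * D.s k) (x * D.s k) := by
  have e : ∀ z : D.W, (z * D.s k)⁻¹ = D.s k * z⁻¹ := by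
    intro z; rw [mul_inv_rev, D.s_inv]
  have hup' : D.length x⁻¹ < D.length (D.s k * x⁻¹) := by
    rw [← e, D.length_inv, D.length_inv]
    exact hup
  have h2 := D.bruhat_smul_mono hup' (D.bruhatLE_inv h)
  rw [← e, ← e] at h2
  have h3 := D.bruhatLE_inv h2
  rwa [inv_inv, inv_inv] at h3

lemma bruhat_lift_right {w v : D.W} {k : D.I}
    (hdesc : D.length (w * D.s k) < D.length w) (h : D.bruhatLE v w) :
    D.bruhatLE v (w * D.s k) ∨
      (D.length (v * D.s k) < D.length v ∧ D.bruhatLE (v * D.s k) (w * D.s k)) := by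
  have e : ∀ z : D.W, (z * D.s k)⁻¹ = D.s k * z⁻¹ := by
    intro z; rw [mul_inv_rev, D.s_inv]
  have hdesc' : D.length (D.s k * w⁻¹) < D.length w⁻¹ := by
    rw [← e, D.length_inv, D.length_inv]
    exact hdesc
  rcases D.bruhat_lift hdesc' (D.bruhatLE_inv h) with h1 | ⟨h2, h3⟩
  · left
    have := D.bruhatLE_inv h1
    rwa [inv_inv, ← e, inv_inv] at this
  · right
    constructor
    · rw [← e, D.length_inv, D.length_inv] at h2
      exact h2
    · have := D.bruhatLE_inv h3
      rwa [← e, ← e, inv_inv, inv_inv] at this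


/-! ### Right-multiplication length lemmas -/

lemma length_mul_s_lt_of_not_pos {x : D.W} {k : D.I}
    (h : ¬ D.IsPosRoot (D.act x (D.simple k))) :
    D.length (x * D.s k) < D.length x := by
  have := D.length_mul_srefl_lt (g := x) (D.isPosRoot_simple k) h
  rwa [← D.s_eq] at this

lemma length_mul_s_gt_of_pos {x : D.W} {k : D.I}
    (h : D.IsPosRoot (D.act x (D.simple k))) :
    D.length x < D.length (x * D.s k) := by
  have := D.length_mul_srefl_gt (g := x) (D.isPosRoot_simple k) h
  rwa [← D.s_eq] at this

lemma not_pos_of_length_mul_s_lt {x : D.W} {k : D.I}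
    (h : D.length (x * D.s k) < D.length x) :
    ¬ D.IsPosRoot (D.act x (D.simple k)) := by
  intro hpos
  have := D.length_mul_s_gt_of_pos hpos
  omega

lemma mul_s_up_or_down (x : D.W) (k : D.I) :
    D.length (x * D.s k) = D.length x + 1 ∨ D.length (x * D.s k) + 1 = D.length x := by
  by_cases hpos : D.IsPosRoot (D.act x (D.simple k))
  · left
    have h1 := D.length_mul_s_gt_of_pos hpos
    have h2 : D.length (x * D.s k) ≤ D.length x + 1 := by
      calc D.length (x * D.s k) ≤ D.length x + D.length (D.s k) := D.length_mul_le _ _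
      _ ≤ D.length x + 1 := by have := D.length_s_le k; omega
    omega
  · right
    have h1 := D.length_mul_s_lt_of_not_pos hpos
    have h2 : D.length x ≤ D.length (x * D.s k) + 1 := by
      have e : x = (x * D.s k) * D.s k := by rw [mul_assoc, D.s_mul_s, mul_one]
      calc D.length x = D.length ((x * D.s k) * D.s k) := by rw [← e]
      _ ≤ D.length (x * D.s k) + D.length (D.s k) := D.length_mul_le _ _
      _ ≤ D.length (x * D.s k) + 1 := by have := D.length_s_le k; omega
    omega

/-! ### The stabilizer as a "parabolic" subgroup -/

variable (pi : D.V)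

lemma mem_stab_iff {g : D.W} : g ∈ D.stab pi ↔ D.act g pi = pi := Iff.rfl

lemma srefl_mem_stab {β : D.V} (hβ : β ∈ D.roots) (h0 : D.coroot β pi = 0) :
    D.srefl β ∈ D.stab pi := by
  rw [D.mem_stab_iff, D.srefl_apply β hβ, h0, zero_smul, sub_zero]

lemma s_mem_stab {j : D.I} (h0 : D.coroot (D.simple j) pi = 0) :
    D.s j ∈ D.stab pi :=
  D.srefl_mem_stab pi (D.simple_mem j) h0

lemma act_pi_eq_of_coset {x y : D.W} (h : x⁻¹ * y ∈ D.stab pi) :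
    D.act y pi = D.act x pi := by
  have e : y = x * (x⁻¹ * y) := by group
  rw [e, D.act_mul, (D.mem_stab_iff pi).mp h]

lemma stab_word (hpi : D.IsDominant pi) {h : D.W} (hh : h ∈ D.stab pi) :
    ∃ l : List D.I, (∀ j ∈ l, D.coroot (D.simple j) pi = 0) ∧
      D.wordProd l = h ∧ D.IsRW l := by
  generalize hn : D.length h = n
  induction n using Nat.strong_induction_on generalizing h with
  | _ n ih =>
  by_cases h1 : h = 1
  · exact ⟨[], by simp, by rw [D.wordProd_nil, h1], D.isRW_nil⟩
  · obtain ⟨i, hi⟩ := D.exists_right_descent h1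
    have hnp : ¬ D.IsPosRoot (D.act h (D.simple i)) := D.not_pos_of_length_mul_s_lt hi
    have hδr : D.act h (D.simple i) ∈ D.roots := D.act_root h (D.simple_mem i)
    have hnd : D.IsPosRoot (-(D.act h (D.simple i))) := D.neg_posRoot_of_not hδr hnp
    have hc0 : D.coroot (D.simple i) pi = 0 := by
      have e1 : D.coroot (D.simple i) pi = D.coroot (D.act h (D.simple i)) pi := by
        have := D.coroot_equivariant h (D.simple i) (D.simple_mem i) pi
        rw [(D.mem_stab_iff pi).mp hh] at this
        exact this.symm
      have e2 : D.coroot (-(D.act h (D.simple i))) pi = - D.coroot (D.act h (D.simple i)) pi :=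
        D.coroot_neg_root hδr pi
      have h3 : 0 ≤ D.coroot (-(D.act h (D.simple i))) pi := D.coroot_pi_nonneg hpi hnd
      have h4 : 0 ≤ D.coroot (D.simple i) pi := hpi.2 i
      rw [e1]
      linarith [e2 ▸ h3]
    have hsm : D.s i ∈ D.stab pi := D.s_mem_stab pi hc0
    have hh' : h * D.s i ∈ D.stab pi := mul_mem hh hsm
    have hexact : D.length (h * D.s i) + 1 = D.length h := by
      rcases D.mul_s_up_or_down h i with hc | hc <;> omega
    obtain ⟨l', hl'c, hl'w, hl'r⟩ := ih (D.length (h * D.s i)) (by omega) hh' rfl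
    refine ⟨l' ++ [i], ?_, ?_, ?_⟩
    · intro j hj
      rcases List.mem_append.mp hj with hj | hj
      · exact hl'c j hj
      · rw [List.mem_singleton.mp hj]; exact hc0
    · rw [D.wordProd_append, D.wordProd_singleton, hl'w, mul_assoc, D.s_mul_s, mul_one]
    · unfold IsRW
      rw [D.wordProd_append, D.wordProd_singleton, hl'w, mul_assoc, D.s_mul_s, mul_one]
      have : l'.length = D.length (h * D.s i) := by
        have := hl'r; unfold IsRW at this; rw [hl'w] at this; omega
      simp only [List.length_append, List.length_cons, List.length_nil]
      omega

lemma wordProd_mem_stab {l : List D.I} (hc : ∀ j ∈ l, D.coroot (D.simple j) pi = 0) :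
    D.wordProd l ∈ D.stab pi := by
  induction l with
  | nil => rw [D.wordProd_nil]; exact one_mem _
  | cons i m ih =>
    rw [D.wordProd_cons]
    exact mul_mem (D.s_mem_stab pi (hc i (List.mem_cons_self)))
      (ih (fun j hj => hc j (List.mem_cons_of_mem i hj)))

/-! ### The span of the stabilized simple roots -/

noncomputable def spanJ : Submodule ℚ D.V :=
  Submodule.span ℚ (D.simple '' {j | D.coroot (D.simple j) pi = 0})

lemma simple_mem_spanJ {j : D.I} (h0 : D.coroot (D.simple j) pi = 0) :
    D.simple j ∈ D.spanJ pi :=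
  Submodule.subset_span ⟨j, h0, rfl⟩

lemma act_word_mem_spanJ {l : List D.I} (hc : ∀ j ∈ l, D.coroot (D.simple j) pi = 0)
    {v : D.V} (hv : v ∈ D.spanJ pi) : D.act (D.wordProd l) v ∈ D.spanJ pi := by
  induction l with
  | nil => rw [D.wordProd_nil, D.act_one]; exact hv
  | cons i m ih =>
    rw [D.wordProd_cons, D.act_mul]
    have hm : D.act (D.wordProd m) v ∈ D.spanJ pi :=
      ih (fun j hj => hc j (List.mem_cons_of_mem i hj))
    rw [D.s_eq, D.srefl_apply _ (D.simple_mem i)]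
    exact Submodule.sub_mem _ hm
      (Submodule.smul_mem _ _ (D.simple_mem_spanJ pi (hc i (List.mem_cons_self))))

lemma coords_spanJ_zero {v : D.V} (hv : v ∈ D.spanJ pi) {j : D.I}
    (hj : D.coroot (D.simple j) pi ≠ 0) : D.coords v j = 0 := by
  induction hv using Submodule.span_induction with
  | mem x hx =>
    obtain ⟨k, hk, rfl⟩ := hx
    rw [D.coords_simple, Finsupp.single_apply]
    rw [if_neg]
    intro hkj
    exact hj (hkj ▸ hk)
  | zero => rw [map_zero]; rfl
  | add x y _ _ hx hy => rw [map_add, Finsupp.add_apply, hx, hy, add_zero]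
  | smul c x _ hx => rw [map_smul, Finsupp.smul_apply, hx, smul_zero]

lemma phi_sum {κ : Type*} (t : Finset κ) (f : κ → D.V) :
    D.phi (∑ i ∈ t, f i) = ∑ i ∈ t, D.phi (f i) := by
  classical
  induction t using Finset.induction_on with
  | empty =>
    simp only [Finset.sum_empty]
    unfold phi
    rw [map_zero]
    simp
  | @insert a t ha ih =>
    rw [Finset.sum_insert ha, Finset.sum_insert ha, D.phi_add, ih]

lemma pos_act_of_pos_on_J {x : D.W}
    (hx : ∀ j, D.coroot (D.simple j) pi = 0 → D.IsPosRoot (D.act x (D.simple j)))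
    {δ : D.V} (hδ : D.IsPosRoot δ) (hmem : δ ∈ D.spanJ pi) :
    D.IsPosRoot (D.act x δ) := by
  have hroot : D.act x δ ∈ D.roots := D.act_root x hδ.1
  by_contra hneg
  have hnd : D.IsPosRoot (-(D.act x δ)) := D.neg_posRoot_of_not hroot hneg
  have hphineg : D.phi (D.act x δ) ≤ -1 := by
    have := D.one_le_phi_posRoot hnd
    rw [D.phi_neg] at this
    linarith
  -- now compute phi (act x δ) ≥ phi δ ≥ 1
  set c : D.I → ℚ := fun j => ((D.posCoeff δ j : ℚ)) with hc
  have hrep : δ = ∑ j, c j • D.simple j := D.posCoeff_rep hδ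
  have hc0 : ∀ j, 0 ≤ c j := fun j => by positivity
  have hcJ : ∀ j, c j ≠ 0 → D.coroot (D.simple j) pi = 0 := by
    intro j hcj
    by_contra hne
    apply hcj
    have := D.coords_spanJ_zero pi hmem hne
    rw [hrep, D.coords_combo] at this
    exact this
  have hact : D.act x δ = ∑ j, c j • D.act x (D.simple j) := by
    rw [hrep, map_sum]
    exact Finset.sum_congr rfl (fun j _ => by rw [map_smul])
  have hterm : ∀ j, c j * 1 ≤ c j * D.phi (D.act x (D.simple j)) := by
    intro j
    by_cases hcj : c j = 0
    · rw [hcj]; simp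
    · have h1 := D.one_le_phi_posRoot (hx j (hcJ j hcj))
      exact mul_le_mul_of_nonneg_left h1 (hc0 j)
  have hphi : D.phi δ ≤ D.phi (D.act x δ) := by
    rw [hact, D.phi_sum]
    have e1 : D.phi δ = ∑ j, c j := by rw [hrep, D.phi_combo]
    rw [e1]
    calc ∑ j, c j = ∑ j, c j * 1 := by simp
    _ ≤ ∑ j, c j * D.phi (D.act x (D.simple j)) :=
      Finset.sum_le_sum (fun j _ => hterm j)
    _ = ∑ j, D.phi (c j • D.act x (D.simple j)) := by
      exact Finset.sum_congr rfl (fun j _ => (D.phi_smul (c j) _).symm)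
  have := D.one_le_phi_posRoot hδ
  linarith

lemma minrep_pos_on_J {x : D.W} (hx : D.IsMinRep (D.stab pi) x) :
    ∀ j, D.coroot (D.simple j) pi = 0 → D.IsPosRoot (D.act x (D.simple j)) := by
  intro j h0
  by_contra hneg
  have hlt : D.length (x * D.s j) < D.length x := D.length_mul_s_lt_of_not_pos hneg
  have hmem : x⁻¹ * (x * D.s j) ∈ D.stab pi := by
    have e : x⁻¹ * (x * D.s j) = D.s j := by group
    rw [e]
    exact D.s_mem_stab pi h0
  have := hx (x * D.s j) hmem
  omega

lemma length_mul_word_J (hpi : D.IsDominant pi) {x : D.W}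
    (hx : ∀ j, D.coroot (D.simple j) pi = 0 → D.IsPosRoot (D.act x (D.simple j)))
    {l : List D.I} (hc : ∀ j ∈ l, D.coroot (D.simple j) pi = 0) (hRW : D.IsRW l) :
    D.length (x * D.wordProd l) = D.length x + l.length := by
  induction l using List.reverseRecOn with
  | nil =>
    rw [D.wordProd_nil, mul_one]
    simp
  | append_singleton m k ih =>
    have hcm : ∀ j ∈ m, D.coroot (D.simple j) pi = 0 :=
      fun j hj => hc j (List.mem_append_left _ hj)
    have hck : D.coroot (D.simple k) pi = 0 :=
      hc k (List.mem_append_right _ (List.mem_cons_self))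
    have hRWm : D.IsRW m := by
      have := D.isRW_take hRW m.length
      rwa [List.take_left] at this
    have ihm := ih hcm hRWm
    have hδpos : D.IsPosRoot (D.act (D.wordProd m) (D.simple k)) := by
      apply (D.act_pos_iff_length_right (g := D.wordProd m) (D.isPosRoot_simple k)).mpr
      rw [← D.s_eq]
      have h1 : D.length (D.wordProd (m ++ [k])) = m.length + 1 := by
        have := hRW; unfold IsRW at this; simpa using this
      rw [D.wordProd_append, D.wordProd_singleton] at h1
      have h2 : D.length (D.wordProd m) = m.length := hRWm
      omega
    have hδmem : D.act (D.wordProd m) (D.simple k) ∈ D.spanJ pi :=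
      D.act_word_mem_spanJ pi hcm (D.simple_mem_spanJ pi hck)
    have hxpos : D.IsPosRoot (D.act x (D.act (D.wordProd m) (D.simple k))) :=
      D.pos_act_of_pos_on_J pi hx hδpos hδmem
    have hfinal : D.IsPosRoot (D.act (x * D.wordProd m) (D.simple k)) := by
      rw [D.act_mul]; exact hxpos
    have hup := D.length_mul_s_gt_of_pos hfinal
    have hub : D.length ((x * D.wordProd m) * D.s k) ≤ D.length (x * D.wordProd m) + 1 := by
      rcases D.mul_s_up_or_down (x * D.wordProd m) k with hcc | hcc <;> omega
    rw [D.wordProd_append, D.wordProd_singleton, ← mul_assoc]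
    simp only [List.length_append, List.length_cons, List.length_nil]
    omega

lemma length_mul_stab (hpi : D.IsDominant pi) {x h : D.W}
    (hx : D.IsMinRep (D.stab pi) x) (hh : h ∈ D.stab pi) :
    D.length (x * h) = D.length x + D.length h := by
  obtain ⟨l, hc, hw, hRW⟩ := D.stab_word pi hpi hh
  have hlen : l.length = D.length h := by
    have := hRW; unfold IsRW at this; rw [hw] at this; omega
  rw [← hw]
  rw [D.length_mul_word_J pi hpi (D.minrep_pos_on_J pi hx) hc hRW]
  have hR := hRW
  unfold IsRW at hR
  omega

lemma minrep_unique (hpi : D.IsDominant pi) {x y : D.W}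
    (hx : D.IsMinRep (D.stab pi) x) (hy : D.IsMinRep (D.stab pi) y)
    (hxy : x⁻¹ * y ∈ D.stab pi) : x = y := by
  have e : y = x * (x⁻¹ * y) := by group
  have h1 : D.length y = D.length x + D.length (x⁻¹ * y) := by
    nth_rewrite 1 [e]
    exact D.length_mul_stab pi hpi hx hxy
  have h2 : D.length y ≤ D.length x := by
    apply hy
    have e2 : y⁻¹ * x = (x⁻¹ * y)⁻¹ := by group
    rw [e2]
    exact inv_mem hxy
  have h3 : D.length (x⁻¹ * y) = 0 := by omega
  have h4 : x⁻¹ * y = 1 := D.eq_one_of_length_eq_zero h3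
  have : y = x := by
    rw [e, h4, mul_one]
  exact this.symm


/-! ### Minimal coset representatives -/

lemma exists_minrep_coset (x : D.W) :
    ∃ z, x⁻¹ * z ∈ D.stab pi ∧ D.IsMinRep (D.stab pi) z := by
  have hne : {n | ∃ g : D.W, x⁻¹ * g ∈ D.stab pi ∧ D.length g = n}.Nonempty := by
    refine ⟨D.length x, x, ?_, rfl⟩
    rw [inv_mul_cancel]
    exact one_mem _
  obtain ⟨z, hz, hzl⟩ := Nat.sInf_mem hne
  refine ⟨z, hz, ?_⟩
  intro g hg
  have hmem : x⁻¹ * g ∈ D.stab pi := by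
    have e : x⁻¹ * g = (x⁻¹ * z) * (z⁻¹ * g) := by group
    rw [e]
    exact mul_mem hz hg
  have : sInf {n | ∃ g : D.W, x⁻¹ * g ∈ D.stab pi ∧ D.length g = n} ≤ D.length g :=
    Nat.sInf_le ⟨g, hmem, rfl⟩
  omega

lemma minrep_one : D.IsMinRep (D.stab pi) 1 := by
  intro g _
  rw [D.length_one]
  exact Nat.zero_le _

lemma minrep_smul_descent {x : D.W} {i : D.I} (hx : D.IsMinRep (D.stab pi) x)
    (hlt : D.length (D.s i * x) < D.length x) : D.IsMinRep (D.stab pi) (D.s i * x) := by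
  intro g hg
  have hmem : x⁻¹ * (D.s i * g) ∈ D.stab pi := by
    have e : x⁻¹ * (D.s i * g) = (D.s i * x)⁻¹ * g := by
      rw [mul_inv_rev, D.s_inv, mul_assoc]
    rw [e]
    exact hg
  have h1 : D.length x ≤ D.length (D.s i * g) := hx _ hmem
  have h2 : D.length (D.s i * g) ≤ 1 + D.length g := by
    calc D.length (D.s i * g) ≤ D.length (D.s i) + D.length g := D.length_mul_le _ _
    _ ≤ 1 + D.length g := by have := D.length_s_le i; omega
  have h3 : D.length (D.s i * x) + 1 = D.length x := by
    rcases D.s_mul_up_or_down x i with hc | hc <;> omega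
  omega

lemma length_mul_stab' (hpi : D.IsDominant pi) {x h : D.W}
    (hx : ∀ j, D.coroot (D.simple j) pi = 0 → D.IsPosRoot (D.act x (D.simple j)))
    (hh : h ∈ D.stab pi) :
    D.length (x * h) = D.length x + D.length h := by
  obtain ⟨l, hc, hw, hRW⟩ := D.stab_word pi hpi hh
  rw [← hw]
  rw [D.length_mul_word_J pi hpi hx hc hRW]
  have hR := hRW
  unfold IsRW at hR
  omega

lemma minrep_le_coset (hpi : D.IsDominant pi) {z h : D.W}
    (hz : D.IsMinRep (D.stab pi) z) (hh : h ∈ D.stab pi) :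
    D.bruhatLE z (z * h) := by
  generalize hn : D.length h = n
  induction n using Nat.strong_induction_on generalizing h with
  | _ n ih =>
  by_cases h1 : h = 1
  · rw [h1, mul_one]
    exact D.bruhatLE_refl z
  · obtain ⟨l, hc, hw, hRW⟩ := D.stab_word pi hpi hh
    rcases List.eq_nil_or_concat l with rfl | ⟨l', k, rfl⟩
    · exact absurd ((D.wordProd_nil ▸ hw).symm) h1
    · simp only [List.concat_eq_append] at hc hw hRW
      have hck : D.coroot (D.simple k) pi = 0 :=
        hc k (List.mem_append_right _ (List.mem_cons_self))
      have hcl : ∀ j ∈ l', D.coroot (D.simple j) pi = 0 :=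
        fun j hj => hc j (List.mem_append_left _ hj)
      have hRWl : D.IsRW l' := by
        have := D.isRW_take hRW l'.length
        rwa [List.take_left] at this
      have hh' : D.wordProd l' ∈ D.stab pi := D.wordProd_mem_stab pi hcl
      have hsk : D.s k ∈ D.stab pi := D.s_mem_stab pi hck
      have he : h = D.wordProd l' * D.s k := by
        rw [← hw, D.wordProd_append, D.wordProd_singleton]
      have hlh' : D.length (D.wordProd l') = l'.length := hRWl
      have hlh : D.length h = l'.length + 1 := by
        have := hRW; unfold IsRW at this; rw [hw] at this
        simp only [List.length_append, List.length_cons, List.length_nil] at this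
        omega
      have hstep : D.bruhatLE z (z * D.wordProd l') :=
        ih (D.length (D.wordProd l')) (by omega) hh' rfl
      have hlen1 : D.length (z * D.wordProd l') = D.length z + l'.length := by
        rw [D.length_mul_stab pi hpi hz hh', hlh']
      have hlen2 : D.length (z * h) = D.length z + l'.length + 1 := by
        rw [D.length_mul_stab pi hpi hz hh, hlh]
        omega
      have hcov : D.bruhatLE (z * D.wordProd l') ((z * D.wordProd l') * D.s k) := by
        apply D.bruhatLE_rcover_s
        have e2 : (z * D.wordProd l') * D.s k = z * h := by rw [he, mul_assoc]
        rw [e2]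
        omega
      have e2 : (z * D.wordProd l') * D.s k = z * h := by rw [he, mul_assoc]
      rw [e2] at hcov
      exact D.bruhatLE_trans hstep hcov

lemma minrep_le_minrep_of_le (hpi : D.IsDominant pi) {y x z : D.W}
    (hy : D.IsMinRep (D.stab pi) y) (hyx : D.bruhatLE y x)
    (hxz : x⁻¹ * z ∈ D.stab pi) (hz : D.IsMinRep (D.stab pi) z) :
    D.bruhatLE y z := by
  generalize hn : D.length x = n
  induction n using Nat.strong_induction_on generalizing x with
  | _ n ih =>
  by_cases hposJ : ∀ j, D.coroot (D.simple j) pi = 0 → D.IsPosRoot (D.act x (D.simple j))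
  · have hxm : D.IsMinRep (D.stab pi) x := by
      intro g hg
      have e : g = x * (x⁻¹ * g) := by group
      have : D.length g = D.length x + D.length (x⁻¹ * g) := by
        nth_rewrite 1 [e]
        exact D.length_mul_stab' pi hpi hposJ hg
      omega
    have : x = z := D.minrep_unique pi hpi hxm hz hxz
    rw [← this]
    exact hyx
  · push_neg at hposJ
    obtain ⟨j, hj0, hjneg⟩ := hposJ
    have hlt : D.length (x * D.s j) < D.length x := D.length_mul_s_lt_of_not_pos hjneg
    have hxz' : (x * D.s j)⁻¹ * z ∈ D.stab pi := by
      have e : (x * D.s j)⁻¹ * z = D.s j * (x⁻¹ * z) := by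
        rw [mul_inv_rev, D.s_inv, mul_assoc]
      rw [e]
      exact mul_mem (D.s_mem_stab pi hj0) hxz
    rcases D.bruhat_lift_right hlt hyx with h1 | ⟨h2, _⟩
    · exact ih (D.length (x * D.s j)) (by omega) h1 hxz' rfl
    · exfalso
      have hmem : y⁻¹ * (y * D.s j) ∈ D.stab pi := by
        have e : y⁻¹ * (y * D.s j) = D.s j := by group
        rw [e]
        exact D.s_mem_stab pi hj0
      have := hy _ hmem
      omega


/-! ### The weight-gap function g -/

noncomputable def gfun (x : D.W) : ℚ := D.phi (pi - D.act x pi)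

lemma phi_zero : D.phi 0 = 0 := by
  unfold phi
  rw [map_zero]
  simp

lemma phi_simple (i : D.I) : D.phi (D.simple i) = 1 := by
  unfold phi
  rw [D.coords_simple]
  simp [Finsupp.single_apply]

lemma gfun_one : D.gfun pi 1 = 0 := by
  unfold gfun
  rw [D.act_one, sub_self, D.phi_zero]

lemma gfun_srefl_mul {β : D.V} (hβ : β ∈ D.roots) (x : D.W) :
    D.gfun pi (D.srefl β * x) =
      D.gfun pi x + D.coroot β (D.act x pi) * D.phi β := by
  unfold gfun
  rw [D.act_mul, D.srefl_apply β hβ]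
  have e : pi - (D.act x pi - D.coroot β (D.act x pi) • β) =
      (pi - D.act x pi) + D.coroot β (D.act x pi) • β := by abel
  rw [e, D.phi_add, D.phi_smul]

lemma coroot_act_pi {β : D.V} (hβ : β ∈ D.roots) (x : D.W) :
    D.coroot β (D.act x pi) = D.coroot (D.act x⁻¹ β) pi := by
  have := D.coroot_act_inv (g := x⁻¹) hβ pi
  rw [inv_inv] at this
  exact this.symm

lemma gfun_coset {x y : D.W} (h : x⁻¹ * y ∈ D.stab pi) :
    D.gfun pi y = D.gfun pi x := by
  unfold gfun
  rw [D.act_pi_eq_of_coset pi h]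

lemma gfun_mono (hpi : D.IsDominant pi) {a b : D.W} (h : D.bruhatLE a b) :
    D.gfun pi a ≤ D.gfun pi b := by
  induction h with
  | refl => exact le_refl _
  | @tail x y hax hxy ih =>
    obtain ⟨⟨β, hβ, heq⟩, hlen⟩ := hxy
    subst heq
    refine le_trans ih ?_
    rw [D.gfun_srefl_mul pi hβ.1 x]
    have hδpos : D.IsPosRoot (D.act x⁻¹ β) :=
      (D.act_inv_pos_iff_length_left hβ).mpr hlen
    have h1 : 0 ≤ D.coroot β (D.act x pi) := by
      rw [D.coroot_act_pi pi hβ.1 x]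
      exact D.coroot_pi_nonneg hpi hδpos
    have h2 := D.one_le_phi_posRoot hβ
    nlinarith

lemma pairing_pos_ne_zero_ge_one (hpi : D.IsDominant pi) {δ : D.V}
    (hδ : D.IsPosRoot δ) (hne : D.coroot δ pi ≠ 0) : 1 ≤ D.coroot δ pi := by
  obtain ⟨nz, hnz⟩ := hpi.1 δ hδ
  have h0 := D.coroot_pi_nonneg hpi hδ
  rw [hnz] at h0 hne ⊢
  have : 0 ≤ nz := by exact_mod_cast h0
  have : nz ≠ 0 := by exact_mod_cast hne
  have : 1 ≤ nz := by omega
  exact_mod_cast this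

lemma pairing_ge_one (hpi : D.IsDominant pi) {x x'' : D.W} {i : D.I}
    (hx : D.IsMinRep (D.stab pi) x) (he : x = D.s i * x'')
    (hlen : D.length x'' + 1 = D.length x) :
    1 ≤ D.coroot (D.simple i) (D.act x'' pi) := by
  have hup : D.length x'' < D.length (D.s i * x'') := by rw [← he]; omega
  have hδpos : D.IsPosRoot (D.act x''⁻¹ (D.simple i)) := by
    apply (D.act_inv_pos_iff_length_left (g := x'') (D.isPosRoot_simple i)).mpr
    rw [← D.s_eq]
    exact hup
  have e1 : D.coroot (D.simple i) (D.act x'' pi) =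
      D.coroot (D.act x''⁻¹ (D.simple i)) pi := D.coroot_act_pi pi (D.simple_mem i) x''
  rw [e1]
  apply D.pairing_pos_ne_zero_ge_one pi hpi hδpos
  intro h0
  have hmem : D.srefl (D.act x''⁻¹ (D.simple i)) ∈ D.stab pi :=
    D.srefl_mem_stab pi (D.act_root _ (D.simple_mem i)) h0
  have hconj : x''⁻¹ * D.srefl (D.simple i) * x'' = D.srefl (D.act x''⁻¹ (D.simple i)) := by
    have := D.srefl_conj x''⁻¹ (D.simple_mem i)
    rwa [inv_inv] at this
  have hxx : x⁻¹ * x'' ∈ D.stab pi := by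
    have e2 : x⁻¹ * x'' = x''⁻¹ * D.srefl (D.simple i) * x'' := by
      rw [he, D.s_eq, mul_inv_rev, D.srefl_inv (D.simple_mem i), mul_assoc]
    rw [e2, hconj]
    exact hmem
  have := hx x'' hxx
  omega

lemma gfun_ge_length (hpi : D.IsDominant pi) {x : D.W}
    (hx : D.IsMinRep (D.stab pi) x) : (D.length x : ℚ) ≤ D.gfun pi x := by
  generalize hn : D.length x = n
  induction n using Nat.strong_induction_on generalizing x with
  | _ n ih =>
  by_cases h0 : D.length x = 0
  · have : x = 1 := D.eq_one_of_length_eq_zero h0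
    rw [this, D.gfun_one]
    rw [this] at hn
    rw [← hn, D.length_one]
    norm_num
  · obtain ⟨l, hRW, hw⟩ := D.exists_isRW x
    cases l with
    | nil =>
      exfalso
      apply h0
      rw [← hw, D.wordProd_nil, D.length_one]
    | cons i m =>
      have he : x = D.s i * D.wordProd m := by rw [← hw, D.wordProd_cons]
      have hRWm : D.IsRW m := D.isRW_cons hRW
      have hlm : D.length (D.wordProd m) = m.length := hRWm
      have hlx : D.length x = m.length + 1 := by
        rw [← hw]
        have := hRW; unfold IsRW at this
        simpa using this
      have hlrel : D.length (D.wordProd m) + 1 = D.length x := by omega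
      have hm : D.IsMinRep (D.stab pi) (D.wordProd m) := by
        have e2 : D.wordProd m = D.s i * x := by
          rw [he, ← mul_assoc, D.s_mul_s, one_mul]
        rw [e2]
        exact D.minrep_smul_descent pi hx (by rw [← e2]; omega)
      have hc := D.pairing_ge_one pi hpi hx he hlrel
      have hg : D.gfun pi x = D.gfun pi (D.wordProd m) +
          D.coroot (D.simple i) (D.act (D.wordProd m) pi) * 1 := by
        rw [he, D.s_eq, D.gfun_srefl_mul pi (D.simple_mem i), D.phi_simple]
      have ihm := ih (D.length (D.wordProd m)) (by omega) hm rfl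
      rw [hg]
      have : ((D.length x : ℚ)) = (D.length (D.wordProd m) : ℚ) + 1 := by
        rw [← hlrel]
        push_cast
        ring
      rw [← hn, this]
      linarith

lemma gfun_word : ∀ l : List D.I, D.gfun pi (D.wordProd l) =
    ∑ k : Fin l.length, D.coroot (D.simple (l.get k))
      (D.act (D.wordProd (l.drop (k.val + 1))) pi) := by
  intro l
  induction l with
  | nil =>
    rw [D.wordProd_nil, D.gfun_one]
    simp
  | cons i m ih =>
    rw [D.wordProd_cons, D.s_eq, D.gfun_srefl_mul pi (D.simple_mem i), D.phi_simple,
      mul_one, ih]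
    simp only [List.length_cons]
    rw [Fin.sum_univ_succ]
    simp only [List.get_cons_zero, Fin.val_zero, List.drop_succ_cons, List.drop_zero,
      Fin.val_succ, List.get_cons_succ]
    rw [add_comm]
    congr 1

lemma suffix_minrep (hpi : D.IsDominant pi) {x : D.W} {l : List D.I}
    (hx : D.IsMinRep (D.stab pi) x) (hRW : D.IsRW l) (hw : D.wordProd l = x) :
    ∀ k : ℕ, D.IsMinRep (D.stab pi) (D.wordProd (l.drop k)) := by
  intro k
  induction k with
  | zero => rw [List.drop_zero, hw]; exact hx
  | succ k ihk =>
    by_cases hk : k < l.length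
    · have hdk : l.drop k = l[k] :: l.drop (k + 1) := List.drop_eq_getElem_cons hk
      have he : D.wordProd (l.drop (k+1)) = D.s (l[k]) * D.wordProd (l.drop k) := by
        rw [hdk, D.wordProd_cons, ← mul_assoc, D.s_mul_s, one_mul]
      have hl1 : D.length (D.wordProd (l.drop k)) = l.length - k := by
        have := D.isRW_drop hRW k
        unfold IsRW at this
        rw [this, List.length_drop]
      have hl2 : D.length (D.wordProd (l.drop (k+1))) = l.length - (k+1) := by
        have := D.isRW_drop hRW (k+1)
        unfold IsRW at this
        rw [this, List.length_drop]
      rw [he]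
      apply D.minrep_smul_descent pi ihk
      rw [← he]
      omega
    · have : l.drop (k+1) = [] := List.drop_eq_nil_of_le (by omega)
      rw [this, D.wordProd_nil]
      exact D.minrep_one pi

lemma minuscule_iff_gfun (hpi : D.IsDominant pi) {x : D.W}
    (hx : D.IsMinRep (D.stab pi) x) :
    D.IsMinuscule pi x ↔ D.gfun pi x = (D.length x : ℚ) := by
  constructor
  · rintro ⟨l, ⟨hw, hlen⟩, hcond⟩
    have e := D.gfun_word pi l
    rw [hw] at e
    rw [e, Finset.sum_congr rfl (fun k _ => hcond k), Finset.sum_const, Finset.card_univ]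
    simp [Fintype.card_fin, hlen]
  · intro hgf
    obtain ⟨l, hw, hlen⟩ := D.exists_reduced_word x
    have hRW : D.IsRW l := D.isRW_of_reduced hw hlen
    set c : Fin l.length → ℚ := fun k =>
      D.coroot (D.simple (l.get k)) (D.act (D.wordProd (l.drop (k.val + 1))) pi) with hcdef
    have hge : ∀ k : Fin l.length, 1 ≤ c k := by
      intro k
      have hdk : l.drop k.val = l[k.val] :: l.drop (k.val + 1) :=
        List.drop_eq_getElem_cons k.2
      have he : D.wordProd (l.drop k.val) =
          D.s (l.get k) * D.wordProd (l.drop (k.val + 1)) := by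
        rw [hdk, D.wordProd_cons]
        rfl
      have hl1 : D.length (D.wordProd (l.drop k.val)) = l.length - k.val := by
        have := D.isRW_drop hRW k.val
        unfold IsRW at this
        rw [this, List.length_drop]
      have hl2 : D.length (D.wordProd (l.drop (k.val+1))) = l.length - (k.val+1) := by
        have := D.isRW_drop hRW (k.val+1)
        unfold IsRW at this
        rw [this, List.length_drop]
      have hkmr := D.suffix_minrep pi hpi hx hRW hw k.val
      apply D.pairing_ge_one pi hpi hkmr he
      have := k.2
      omega
    have hsum : ∑ k : Fin l.length, c k = (l.length : ℚ) := by
      rw [hcdef]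
      have := D.gfun_word pi l
      rw [hw] at this
      rw [← this, hgf, hlen]
    have hzero : ∑ k : Fin l.length, (c k - 1) = 0 := by
      rw [Finset.sum_sub_distrib, hsum]
      simp
    have hall : ∀ k ∈ Finset.univ, c k - 1 = 0 := by
      apply (Finset.sum_eq_zero_iff_of_nonneg ?_).mp hzero
      intro k _
      have := hge k
      linarith
    refine ⟨l, ⟨hw, hlen⟩, ?_⟩
    intro k
    have := hall k (Finset.mem_univ k)
    have : c k = 1 := by linarith
    exact this


/-! ### Chain lemma: the quotient poset has steps of length one -/

lemma exists_left_descent {x : D.W} (hx : x ≠ 1) :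
    ∃ i, D.length (D.s i * x) < D.length x := by
  have hxi : x⁻¹ ≠ 1 := fun h => hx (by rw [← inv_inv x, h, inv_one])
  obtain ⟨i, hi⟩ := D.exists_right_descent hxi
  refine ⟨i, ?_⟩
  have e : (x⁻¹ * D.s i)⁻¹ = D.s i * x := by rw [mul_inv_rev, D.s_inv, inv_inv]
  have h1 : D.length (D.s i * x) = D.length (x⁻¹ * D.s i) := by
    rw [← e, D.length_inv]
  have h2 := D.length_inv x
  omega

lemma s_mul_cancel (i : D.I) (x : D.W) : D.s i * (D.s i * x) = x := by
  rw [← mul_assoc, D.s_mul_s, one_mul]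

lemma qcp (hpi : D.IsDominant pi) {v w : D.W}
    (hv : D.IsMinRep (D.stab pi) v) (hw : D.IsMinRep (D.stab pi) w)
    (hvw : D.bruhatLE v w) (hne : v ≠ w) :
    ∃ z, D.IsMinRep (D.stab pi) z ∧ D.bruhatLE v z ∧ D.bruhatLE z w ∧ z ≠ w ∧
      D.length z + 1 = D.length w := by
  generalize hn : D.length w = n
  induction n using Nat.strong_induction_on generalizing v w with
  | _ n ih =>
  subst hn
  have hlv : D.length v < D.length w := by
    have h1 := D.length_le_of_bruhatLE hvw
    rcases lt_or_eq_of_le h1 with h | h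
    · exact h
    · exact absurd (D.eq_of_bruhatLE_length hvw (le_of_eq h.symm)) hne
  have hw1 : w ≠ 1 := by
    intro h
    rw [h, D.length_one] at hlv
    omega
  obtain ⟨i, hi⟩ := D.exists_left_descent hw1
  have hw'm : D.IsMinRep (D.stab pi) (D.s i * w) := D.minrep_smul_descent pi hw hi
  have hw'len : D.length (D.s i * w) + 1 = D.length w := by
    rcases D.s_mul_up_or_down w i with h | h <;> omega
  have hwcov : D.bruhatLE (D.s i * w) w := by
    have h := D.bruhatLE_cover_s (a := D.s i * w) (i := i)
      (by rw [D.s_mul_cancel]; omega)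
    rwa [D.s_mul_cancel] at h
  by_cases hvw' : D.bruhatLE v (D.s i * w)
  · refine ⟨D.s i * w, hw'm, hvw', hwcov, ?_, hw'len⟩
    intro h
    rw [h] at hw'len
    omega
  · rcases D.bruhat_lift hi hvw with h1 | ⟨hvdesc, hvle⟩
    · exact absurd h1 hvw'
    · have hv'm : D.IsMinRep (D.stab pi) (D.s i * v) := D.minrep_smul_descent pi hv hvdesc
      have hv'len : D.length (D.s i * v) + 1 = D.length v := by
        rcases D.s_mul_up_or_down v i with h | h <;> omega
      have hne' : D.s i * v ≠ D.s i * w := by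
        intro h
        apply hne
        have : D.s i * (D.s i * v) = D.s i * (D.s i * w) := by rw [h]
        rwa [D.s_mul_cancel, D.s_mul_cancel] at this
      obtain ⟨z', hz'm, hv'z', hz'w', hz'ne, hz'len⟩ :=
        ih (D.length (D.s i * w)) (by omega) hv'm hw'm hvle hne' rfl
      have hvsz : D.length z' < D.length (D.s i * z') →
          D.bruhatLE v (D.s i * z') := by
        intro hup
        have h := D.bruhat_smul_mono hup hv'z'
        rwa [D.s_mul_cancel] at h
      by_cases hup : D.length z' < D.length (D.s i * z')
      · have hupeq : D.length (D.s i * z') = D.length z' + 1 := by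
          rcases D.s_mul_up_or_down z' i with hh | hh <;> omega
        by_cases hzm : D.IsMinRep (D.stab pi) (D.s i * z')
        · refine ⟨D.s i * z', hzm, hvsz hup, ?_, ?_, ?_⟩
          · have h := D.bruhat_smul_mono (x := D.s i * w)
              (by rw [D.s_mul_cancel]; omega) hz'w'
            rwa [D.s_mul_cancel] at h
          · intro h
            rw [h] at hupeq
            omega
          · omega
        · exfalso
          -- s i * z' is not a minimal representative: project back onto z'
          have hex : ∃ k, D.coroot (D.simple k) pi = 0 ∧
              ¬ D.IsPosRoot (D.act (D.s i * z') (D.simple k)) := by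
            by_contra hall
            push_neg at hall
            apply hzm
            intro g hg
            have e : g = (D.s i * z') * ((D.s i * z')⁻¹ * g) := by group
            have : D.length g = D.length (D.s i * z') +
                D.length ((D.s i * z')⁻¹ * g) := by
              nth_rewrite 1 [e]
              exact D.length_mul_stab' pi hpi (fun j hj => hall j hj) hg
            omega
          obtain ⟨k, hk0, hkneg⟩ := hex
          have hzpos : D.IsPosRoot (D.act z' (D.simple k)) :=
            D.minrep_pos_on_J pi hz'm k hk0
          have hkneg' : ¬ D.IsPosRoot (D.act (D.s i) (D.act z' (D.simple k))) := by
            rw [← D.act_mul]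
            exact hkneg
          obtain ⟨cc, hcc, hccrep⟩ := D.exists_smul_simple i hzpos hkneg'
          have hmem2 : (D.s i * z')⁻¹ * z' ∈ D.stab pi := by
            have e1 : (D.s i * z')⁻¹ * z' = z'⁻¹ * D.s i * z' := by
              rw [mul_inv_rev, D.s_inv, mul_assoc]
            have e2 : z'⁻¹ * D.s i * z' = D.srefl (D.act z'⁻¹ (D.simple i)) := by
              have h := D.srefl_conj z'⁻¹ (D.simple_mem i)
              rw [inv_inv] at h
              rw [D.s_eq]
              exact h
            have e3 : D.act z'⁻¹ (D.simple i) = (1 / cc) • D.simple k := by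
              have h : D.simple i = (1 / cc) • D.act z' (D.simple k) := by
                rw [hccrep, smul_smul, one_div, inv_mul_cancel₀ (ne_of_gt hcc), one_smul]
              rw [h, map_smul, D.act_inv_act]
            have hroot3 : ((1 : ℚ) / cc) • D.simple k ∈ D.roots := by
              rw [← e3]
              exact D.act_root z'⁻¹ (D.simple_mem i)
            have e4 : D.srefl ((1 / cc) • D.simple k) = D.s k := by
              rw [D.s_eq]
              exact D.srefl_smul_eq (D.simple_mem k) (by positivity) hroot3
            rw [e1, e2, e3, e4]
            exact D.s_mem_stab pi hk0
          have hvz' : D.bruhatLE v z' :=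
            D.minrep_le_minrep_of_le pi hpi hv (hvsz hup) hmem2 hz'm
          exact hvw' (D.bruhatLE_trans hvz' hz'w')
      · -- s i is a descent of z'
        have hdown : D.length (D.s i * z') + 1 = D.length z' := by
          rcases D.s_mul_up_or_down z' i with h | h <;> omega
        rcases D.bruhat_lift (by omega : D.length (D.s i * z') < D.length z') hv'z'
          with h1 | ⟨h2, _⟩
        · -- s i * v ≤ s i * z', so v ≤ z'
          have hup2 : D.length (D.s i * z') <
              D.length (D.s i * (D.s i * z')) := by
            rw [D.s_mul_cancel]; omega
          have h := D.bruhat_smul_mono hup2 h1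
          rw [D.s_mul_cancel, D.s_mul_cancel] at h
          exact absurd (D.bruhatLE_trans h hz'w') hvw'
        · exfalso
          rw [D.s_mul_cancel] at h2
          omega

/-! ### The crucial descent lemma -/

lemma simple_of_phi_one {γ : D.V} (hγ : D.IsPosRoot γ) (h1 : D.phi γ = 1) :
    ∃ i, γ = D.simple i := by
  have hN : ((∑ i, D.posCoeff γ i : ℕ) : ℚ) = 1 := by
    rw [← D.phi_posRoot_eq hγ, h1]
  have hN1 : (∑ i, D.posCoeff γ i : ℕ) = 1 := by exact_mod_cast hN
  have hex : ∃ i, D.posCoeff γ i ≠ 0 := by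
    by_contra hall
    push_neg at hall
    rw [Finset.sum_congr rfl (fun i _ => hall i)] at hN1
    simp at hN1
  obtain ⟨i0, hi0⟩ := hex
  have hle : D.posCoeff γ i0 ≤ 1 := by
    rw [← hN1]
    exact Finset.single_le_sum (f := fun i => D.posCoeff γ i)
      (fun _ _ => Nat.zero_le _) (Finset.mem_univ i0)
  have hi01 : D.posCoeff γ i0 = 1 := by omega
  have hrest : ∀ j, j ≠ i0 → D.posCoeff γ j = 0 := by
    intro j hj
    have hsplit : D.posCoeff γ i0 + ∑ x ∈ Finset.univ.erase i0, D.posCoeff γ x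
        = ∑ x, D.posCoeff γ x :=
      Finset.add_sum_erase Finset.univ (fun i => D.posCoeff γ i) (Finset.mem_univ i0)
    rw [hN1, hi01] at hsplit
    have hz : ∑ x ∈ Finset.univ.erase i0, D.posCoeff γ x = 0 := by omega
    exact (Finset.sum_eq_zero_iff.mp hz) j (Finset.mem_erase.mpr ⟨hj, Finset.mem_univ j⟩)
  refine ⟨i0, ?_⟩
  rw [D.posCoeff_rep hγ]
  rw [Finset.sum_eq_single i0 (fun j _ hj => by rw [hrest j hj]; simp)
    (fun h => absurd (Finset.mem_univ i0) h)]
  rw [hi01]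
  simp

lemma crux (hpi : D.IsDominant pi) {v w : D.W}
    (hv : D.IsMinRep (D.stab pi) v) (hw : D.IsMinRep (D.stab pi) w)
    (hgw : D.gfun pi w = (D.length w : ℚ)) (hvw : D.bruhatLE v w) (hne : v ≠ w) :
    ∃ i, D.length (D.s i * w) < D.length w ∧ D.bruhatLE v (D.s i * w) := by
  obtain ⟨z, hzm, hvz, hzw, hzne, hzlen⟩ := D.qcp pi hpi hv hw hvw hne
  rcases Relation.ReflTransGen.cases_tail hzw with h | ⟨x, hzx, step⟩
  · exact absurd h.symm hzne
  obtain ⟨⟨γ, hγ, heqw⟩, hlenw⟩ := step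
  obtain ⟨z₂, hxz₂, hz₂m⟩ := D.exists_minrep_coset pi x
  have hzz₂ : D.bruhatLE z z₂ := D.minrep_le_minrep_of_le pi hpi hzm hzx hxz₂ hz₂m
  have hlz₂x : D.length z₂ ≤ D.length x := by
    apply hz₂m
    have e : z₂⁻¹ * x = (x⁻¹ * z₂)⁻¹ := by group
    rw [e]
    exact inv_mem hxz₂
  have hlzz₂ : D.length z ≤ D.length z₂ := D.length_le_of_bruhatLE hzz₂
  have hlxw : D.length x < D.length w := by rw [heqw] at hlenw ⊢; exact hlenw
  have hzeq : z = z₂ := D.eq_of_bruhatLE_length hzz₂ (by omega)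
  have hxz : x⁻¹ * z ∈ D.stab pi := by rw [hzeq]; exact hxz₂
  -- the pairing c
  have hδpos : D.IsPosRoot (D.act x⁻¹ γ) := by
    apply (D.act_inv_pos_iff_length_left hγ).mpr
    rw [← heqw]
    exact hlxw
  set c := D.coroot γ (D.act x pi) with hcdef
  have hc0 : 0 ≤ c := by
    rw [hcdef, D.coroot_act_pi pi hγ.1 x]
    exact D.coroot_pi_nonneg hpi hδpos
  have hcne : c ≠ 0 := by
    intro h0
    have hwx : w⁻¹ * x ∈ D.stab pi := by
      rw [D.mem_stab_iff]
      have e1 : D.act w pi = D.act x pi := by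
        rw [heqw, D.act_mul, D.srefl_apply γ hγ.1, hcdef] at *
        rw [h0, zero_smul, sub_zero]
      rw [D.act_mul, ← e1, D.act_inv_act]
    have := hw x hwx
    omega
  have hcge1 : 1 ≤ c := by
    rw [hcdef, D.coroot_act_pi pi hγ.1 x] at *
    exact D.pairing_pos_ne_zero_ge_one pi hpi hδpos hcne
  have hphi := D.one_le_phi_posRoot hγ
  -- g bookkeeping
  have hgw' : D.gfun pi w = D.gfun pi x + c * D.phi γ := by
    rw [heqw, D.gfun_srefl_mul pi hγ.1 x, hcdef]
  have hgz : D.gfun pi z = D.gfun pi x := D.gfun_coset pi hxz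
  have hglen : (D.length z : ℚ) ≤ D.gfun pi z := D.gfun_ge_length pi hpi hzm
  have hcast : (D.length z : ℚ) = (D.length w : ℚ) - 1 := by
    have : (D.length z : ℚ) + 1 = (D.length w : ℚ) := by exact_mod_cast hzlen
    linarith
  have hcphi : c * D.phi γ ≤ 1 := by
    have h1 : D.gfun pi x + c * D.phi γ = (D.length w : ℚ) := by
      rw [← hgw', hgw]
    have h2 : (D.length z : ℚ) ≤ D.gfun pi x := by
      rw [← hgz]; exact hglen
    linarith [hcast, h1, h2]
  have hphi1 : D.phi γ = 1 := by nlinarith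
  obtain ⟨i, hγi⟩ := D.simple_of_phi_one hγ hphi1
  refine ⟨i, ?_, ?_⟩
  · have e : D.s i * w = x := by
      rw [D.s_eq, ← hγi, heqw, ← mul_assoc, D.srefl_sq hγ.1, one_mul]
    rw [e]
    exact hlxw
  · have e : D.s i * w = x := by
      rw [D.s_eq, ← hγi, heqw, ← mul_assoc, D.srefl_sq hγ.1, one_mul]
    rw [e]
    exact D.bruhatLE_trans hvz hzx

/-! ### The main proposition -/

lemma length_smul_s_eq {w : D.W} {i : D.I} (h : D.length (D.s i * w) < D.length w) :
    D.length (D.s i * w) + 1 = D.length w := by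
  rcases D.s_mul_up_or_down w i with hh | hh <;> omega

lemma main_prop (hpi : D.IsDominant pi) {v w : D.W}
    (hv : D.IsMinRep (D.stab pi) v) (hw : D.IsMinRep (D.stab pi) w)
    (hgw : D.gfun pi w = (D.length w : ℚ)) (hvw : D.bruhatLE v w) :
    D.gfun pi v = (D.length v : ℚ) ∧ D.weakLE v w := by
  generalize hn : D.length w = n
  induction n using Nat.strong_induction_on generalizing w with
  | _ n ih =>
  by_cases hne : v = w
  · subst hne
    exact ⟨hgw, D.weakLE_refl v⟩
  · obtain ⟨i, hdesc, hvw'⟩ := D.crux pi hpi hv hw hgw hvw hne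
    set w' := D.s i * w with hw'def
    have hw'm : D.IsMinRep (D.stab pi) w' := D.minrep_smul_descent pi hw hdesc
    have hw'len : D.length w' + 1 = D.length w := D.length_smul_s_eq hdesc
    have hewd : w = D.s i * w' := by rw [hw'def, D.s_mul_cancel]
    have hc1 : 1 ≤ D.coroot (D.simple i) (D.act w' pi) :=
      D.pairing_ge_one pi hpi hw hewd hw'len
    have hgrel : D.gfun pi w = D.gfun pi w' +
        D.coroot (D.simple i) (D.act w' pi) * 1 := by
      nth_rewrite 1 [hewd]
      rw [D.s_eq, D.gfun_srefl_mul pi (D.simple_mem i), D.phi_simple]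
    have hglb : (D.length w' : ℚ) ≤ D.gfun pi w' := D.gfun_ge_length pi hpi hw'm
    have hcastw : (D.length w' : ℚ) = (D.length w : ℚ) - 1 := by
      have : (D.length w' : ℚ) + 1 = (D.length w : ℚ) := by exact_mod_cast hw'len
      linarith
    have hgw' : D.gfun pi w' = (D.length w' : ℚ) := by
      rw [hgrel] at hgw
      rw [hcastw]
      linarith
    obtain ⟨hgv, hweak⟩ := ih (D.length w') (by omega) hw'm hgw' hvw' rfl
    refine ⟨hgv, D.weakLE_trans hweak ?_⟩
    unfold weakLE
    have e : w * w'⁻¹ = D.s i := by rw [hewd]; group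
    rw [e, D.length_s i]
    omega

end WeylSetting
/-- For a dominant integral weight `π` with `Stab_W(π) = W_P` and `π`-minuscule
elements `u < w` in `W^P`, the interval `[u,w]^P` in the strong Bruhat order
coincides with the interval in the left weak Bruhat order. -/
theorem weak_eq_strong_interval
    (D : WeylSetting) (pi : D.V) (hpi : D.IsDominant pi)
    (u w : D.W) (hu : D.IsMinuscule pi u) (hw : D.IsMinuscule pi w)
    (hur : D.IsMinRep (D.stab pi) u) (hwr : D.IsMinRep (D.stab pi) w)
    (huw : D.bruhatLT u w) :
    {v : D.W | D.IsMinRep (D.stab pi) v ∧ D.bruhatLE u v ∧ D.bruhatLE v w} =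
      {v : D.W | D.IsMinRep (D.stab pi) v ∧ D.weakLE u v ∧ D.weakLE v w} := by
  ext v
  simp only [Set.mem_setOf_eq]
  constructor
  · rintro ⟨hm, h1, h2⟩
    have hgw : D.gfun pi w = (D.length w : ℚ) :=
      (D.minuscule_iff_gfun pi hpi hwr).mp hw
    obtain ⟨hgv, hBw⟩ := D.main_prop pi hpi hm hwr hgw h2
    obtain ⟨_, hBu⟩ := D.main_prop pi hpi hur hm hgv h1
    exact ⟨hm, hBu, hBw⟩
  · rintro ⟨hm, h1, h2⟩
    exact ⟨hm, D.weakLE_bruhatLE h1, D.weakLE_bruhatLE h2⟩
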